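/- arXiv:1805.12075 — 8 statements merged into one kernel-verified Lean document; each statement's English description precedes it below -/
import Mathlib

section
/- For all natural numbers k, ℓ, n with ℓ ≤ n, one has the identity of rational numbers ∑_{i=0}^{ℓ} C(ℓ,i) · ((2i+2k)!!/(2k)!!) · ((2n−2i−1)!!/(2n−2ℓ−1)!!) = (2n+2k+1)!!/(2n−2ℓ+2k+1)!!. -/
open Finset Nat

private lemma term_rec (k i j : ℕ) :
    (2 * i + 2 + 2 * k)‼ * (2 * j - 1)‼ + (2 * i + 2 * k)‼ * (2 * j + 1)‼ =
      (2 * i + 2 * j + 2 * k + 3) * ((2 * i + 2 * k)‼ * (2 * j - 1)‼) := by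
  have h1 : (2 * i + 2 + 2 * k)‼ = (2 * i + 2 * k + 2) * (2 * i + 2 * k)‼ := by
    rw [show 2 * i + 2 + 2 * k = 2 * i + 2 * k + 2 by ring, Nat.doubleFactorial_add_two]
  cases j with
  | zero => simp [h1]; ring
  | succ j' =>
      have h2 : (2 * (j' + 1) + 1)‼ = (2 * j' + 3) * (2 * j' + 1)‼ := by
        rw [show 2 * (j' + 1) + 1 = 2 * j' + 1 + 2 by ring, Nat.doubleFactorial_add_two]
      have h3 : 2 * (j' + 1) - 1 = 2 * j' + 1 := by omega
      rw [h1, h2, h3]; ring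

private lemma S_rec (k l n : ℕ) (h : l + 1 ≤ n) :
    ∑ i ∈ range (l + 2), (l + 1).choose i * ((2 * i + 2 * k)‼ * (2 * n - 2 * i - 1)‼) =
      (2 * n + 2 * k + 1) *
        ∑ i ∈ range (l + 1), l.choose i * ((2 * i + 2 * k)‼ * (2 * (n - 1) - 2 * i - 1)‼) := by
  have key : ∀ i ∈ range (l + 1),
      (l + 1).choose (i + 1) * ((2 * (i + 1) + 2 * k)‼ * (2 * n - 2 * (i + 1) - 1)‼) +
        l.choose i * ((2 * i + 2 * k)‼ * (2 * n - 2 * i - 1)‼) =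
      (2 * n + 2 * k + 1) * (l.choose i * ((2 * i + 2 * k)‼ * (2 * (n - 1) - 2 * i - 1)‼)) +
        l.choose (i + 1) * ((2 * (i + 1) + 2 * k)‼ * (2 * n - 2 * (i + 1) - 1)‼) := by
    intro i hi
    rw [mem_range] at hi
    obtain ⟨j, hj⟩ : ∃ j, n = i + 1 + j := ⟨n - i - 1, by omega⟩
    subst hj
    have e1 : 2 * (i + 1 + j) - 2 * (i + 1) - 1 = 2 * j - 1 := by omega
    have e2 : 2 * (i + 1 + j) - 2 * i - 1 = 2 * j + 1 := by omega
    have e3 : 2 * (i + 1 + j - 1) - 2 * i - 1 = 2 * j - 1 := by omega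
    have e4 : 2 * (i + 1) + 2 * k = 2 * i + 2 + 2 * k := by ring
    have e5 : 2 * (i + 1 + j) + 2 * k + 1 = 2 * i + 2 * j + 2 * k + 3 := by ring
    rw [e1, e2, e3, e4, e5, Nat.choose_succ_succ, add_mul, add_right_comm,
      ← Nat.mul_add, term_rec]
    ring
  rw [Finset.sum_range_succ' _ (l + 1), Finset.mul_sum]
  have expand := Finset.sum_congr rfl key
  rw [Finset.sum_add_distrib, Finset.sum_add_distrib] at expand
  have last : (∑ i ∈ range (l + 1),
        l.choose (i + 1) * ((2 * (i + 1) + 2 * k)‼ * (2 * n - 2 * (i + 1) - 1)‼)) +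
        l.choose 0 * ((2 * 0 + 2 * k)‼ * (2 * n - 2 * 0 - 1)‼) =
      ∑ i ∈ range (l + 1), l.choose i * ((2 * i + 2 * k)‼ * (2 * n - 2 * i - 1)‼) := by
    have := Finset.sum_range_succ'
      (fun i => l.choose i * ((2 * i + 2 * k)‼ * (2 * n - 2 * i - 1)‼)) (l + 1)
    rw [Finset.sum_range_succ _ (l + 1)] at this
    simp only [Nat.choose_succ_self, zero_mul, add_zero] at this
    omega
  have h0 : (l + 1).choose 0 * ((2 * 0 + 2 * k)‼ * (2 * n - 2 * 0 - 1)‼) =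
      l.choose 0 * ((2 * 0 + 2 * k)‼ * (2 * n - 2 * 0 - 1)‼) := by simp
  omega

private lemma S_eq (k l : ℕ) : ∀ n, l ≤ n →
    ∑ i ∈ range (l + 1), l.choose i * ((2 * i + 2 * k)‼ * (2 * n - 2 * i - 1)‼) =
      (2 * k)‼ * (2 * n - 2 * l - 1)‼ * ∏ j ∈ range l, (2 * n + 2 * k + 1 - 2 * j) := by
  induction l with
  | zero => intro n _; simp
  | succ l ih =>
      intro n hn
      rw [S_rec k l n hn, ih (n - 1) (by omega)]
      rw [Finset.prod_range_succ']
      have e1 : 2 * (n - 1) - 2 * l - 1 = 2 * n - 2 * (l + 1) - 1 := by omega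
      have e2 : ∀ j ∈ range l, 2 * (n - 1) + 2 * k + 1 - 2 * j
          = 2 * n + 2 * k + 1 - 2 * (j + 1) := fun j hj => by omega
      rw [e1, Finset.prod_congr rfl e2]
      have e3 : 2 * n + 2 * k + 1 - 2 * 0 = 2 * n + 2 * k + 1 := by omega
      rw [e3]; ring

private lemma dfac_eq (k l : ℕ) : ∀ n, l ≤ n →
    (2 * n + 2 * k + 1)‼ =
      (2 * n - 2 * l + 2 * k + 1)‼ * ∏ j ∈ range l, (2 * n + 2 * k + 1 - 2 * j) := by
  induction l with
  | zero => intro n _; simp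
  | succ l ih =>
      intro n hn
      have h1 : 2 * n + 2 * k + 1 = 2 * (n - 1) + 2 * k + 1 + 2 := by omega
      rw [h1, Nat.doubleFactorial_add_two, ih (n - 1) (by omega)]
      rw [Finset.prod_range_succ']
      have e2 : ∀ j ∈ range l, 2 * (n - 1) + 2 * k + 1 + 2 - 2 * (j + 1)
          = 2 * (n - 1) + 2 * k + 1 - 2 * j := fun j hj => by omega
      have e3 : 2 * (n - 1) - 2 * l + 2 * k + 1 = 2 * n - 2 * (l + 1) + 2 * k + 1 := by omega
      have e4 : 2 * (n - 1) + 2 * k + 1 + 2 - 2 * 0 = 2 * (n - 1) + 2 * k + 1 + 2 := by omega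
      rw [Finset.prod_congr rfl e2, e3, e4]; ring

/-- **Bandiera's identity.** For all natural numbers `k, ℓ, n` with `ℓ ≤ n`,
`∑_{i=0}^{ℓ} C(ℓ,i) · ((2i+2k)!!/(2k)!!) · ((2n−2i−1)!!/(2n−2ℓ−1)!!)
  = (2n+2k+1)!!/(2n−2ℓ+2k+1)!!`,
where `!!` is the double factorial (with `0!! = 1` and `(−1)!! = 1`; note that the natural
subtraction `2n − 2i − 1` equals `0` when `i = n`, matching the convention `(−1)!! = 1`). -/
theorem statement0 (k l n : ℕ) (h : l ≤ n) :
    ∑ i ∈ Finset.range (l + 1),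
      (l.choose i : ℚ) *
        ((Nat.doubleFactorial (2 * i + 2 * k) : ℚ) / (Nat.doubleFactorial (2 * k) : ℚ)) *
        ((Nat.doubleFactorial (2 * n - 2 * i - 1) : ℚ) /
          (Nat.doubleFactorial (2 * n - 2 * l - 1) : ℚ)) =
      (Nat.doubleFactorial (2 * n + 2 * k + 1) : ℚ) /
        (Nat.doubleFactorial (2 * n - 2 * l + 2 * k + 1) : ℚ) := by
  have hk : ((2 * k)‼ : ℚ) ≠ 0 := Nat.cast_ne_zero.2 (Nat.doubleFactorial_pos _).ne'
  have hl : ((2 * n - 2 * l - 1)‼ : ℚ) ≠ 0 := Nat.cast_ne_zero.2 (Nat.doubleFactorial_pos _).ne'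
  have hr : ((2 * n - 2 * l + 2 * k + 1)‼ : ℚ) ≠ 0 :=
    Nat.cast_ne_zero.2 (Nat.doubleFactorial_pos _).ne'
  have key := S_eq k l n h
  have key2 := dfac_eq k l n h
  have lhs : ∑ i ∈ Finset.range (l + 1),
      (l.choose i : ℚ) * ((Nat.doubleFactorial (2 * i + 2 * k) : ℚ) / ((2 * k)‼ : ℚ)) *
        ((Nat.doubleFactorial (2 * n - 2 * i - 1) : ℚ) / ((2 * n - 2 * l - 1)‼ : ℚ)) =
      ((∑ i ∈ range (l + 1), l.choose i * ((2 * i + 2 * k)‼ * (2 * n - 2 * i - 1)‼) : ℕ) : ℚ) /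
        (((2 * k)‼ : ℚ) * ((2 * n - 2 * l - 1)‼ : ℚ)) := by
    rw [Nat.cast_sum, Finset.sum_div]
    refine Finset.sum_congr rfl fun i _ => ?_
    push_cast
    field_simp
  rw [lhs, key, key2]
  push_cast
  field_simp
end

section
/- Let K be a field and let X = (x_{ij}), Y = (y_{ij}) be 4×4 antisymmetric matrices over K. Then (X·Y)² + (∑_{1≤i<j≤4} x_{ij}·y_{ij})·(X·Y) + Pf(X)·Pf(Y)·I₄ = 0, where I₄ is the 4×4 identity matrix. (Equivalently, in characteristic ≠ 2, (XY)² − (1/2)Tr(XY)·XY + Pf(X)Pf(Y)·I₄ = 0, since (1/2)Tr(XY) = −∑_{i<j} x_{ij}y_{ij}.) -/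
open Matrix

set_option maxHeartbeats 4000000


/-- **Djoković's identity for 4×4 antisymmetric matrices.** If `X, Y` are antisymmetric
`4×4` matrices over a field `K` (i.e. transpose equals negative and diagonal entries vanish),
then `(XY)² + (∑_{i<j} x_{ij} y_{ij})·(XY) + Pf(X)·Pf(Y)·I₄ = 0`. -/
theorem statement2 {K : Type*} [Field K] (X Y : Matrix (Fin 4) (Fin 4) K)
    (hX : Xᵀ = -X) (hX0 : ∀ i, X i i = 0) (hY : Yᵀ = -Y) (hY0 : ∀ i, Y i i = 0) :
    (X * Y) ^ 2 +
      (X 0 1 * Y 0 1 + X 0 2 * Y 0 2 + X 0 3 * Y 0 3 +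
        X 1 2 * Y 1 2 + X 1 3 * Y 1 3 + X 2 3 * Y 2 3) • (X * Y) +
      ((X 0 1 * X 2 3 - X 0 2 * X 1 3 + X 0 3 * X 1 2) *
        (Y 0 1 * Y 2 3 - Y 0 2 * Y 1 3 + Y 0 3 * Y 1 2)) • (1 : Matrix (Fin 4) (Fin 4) K) = 0 := by
  have hXa : ∀ i j, X j i = -X i j := by
    intro i j
    have := congrFun (congrFun hX i) j
    simpa [Matrix.transpose_apply] using this
  have hYa : ∀ i j, Y j i = -Y i j := by
    intro i j
    have := congrFun (congrFun hY i) j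
    simpa [Matrix.transpose_apply] using this
  ext i j
  fin_cases i <;> fin_cases j <;>
    simp [pow_two, Matrix.mul_apply, Fin.sum_univ_four, Matrix.one_apply,
      hX0, hY0, hXa 0 1, hXa 0 2, hXa 0 3, hXa 1 2, hXa 1 3, hXa 2 3,
      hYa 0 1, hYa 0 2, hYa 0 3, hYa 1 2, hYa 1 3, hYa 2 3] <;> ring
end

section
/- Let α ∈ ℂ, η ∈ ⋀²V_ℂ, β ∈ ⋀⁴V_ℂ satisfy vol(η∧η − 2αβ) = 0 and η∧η ≠ 0. Then Z := {(v,ℓ) ∈ V_ℂ ⊕ V_ℂ^∨ : α·v + ℓ⌟η + η∧v + ℓ⌟β = 0} is the graph of a nondegenerate antisymmetric linear map f : V_ℂ → V_ℂ^∨ satisfying vol(β)·ι(ω_f) = −η. (The defining equation has a component in V_ℂ, namely α·v + ℓ⌟η, and a component in ⋀³V_ℂ, namely η∧v + ℓ⌟β, both required to vanish; ℓ⌟(−) denotes contraction of ℓ ∈ V_ℂ^∨ against exterior powers of V_ℂ.) -/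
/-!
Concrete model of the linear algebra of O'Grady's "Compact tori associated to hyperkähler
manifolds of Kummer type".

`V` is a free ℤ-module of rank 4; we model `V_ℂ = V ⊗ ℂ` as `Fin 4 → ℂ` (standard integral
structure), and its dual `V_ℂ^∨` also as `Fin 4 → ℂ` via the dot-product pairing
`⟨ℓ, v⟩ = ℓ ⬝ᵥ v` (dual basis coordinates).  The volume form `vol : ⋀⁴V → ℤ` is the one
with `vol(e₀∧e₁∧e₂∧e₃) = 1`.  We model `⋀²V_ℂ` (and `⋀²V_ℂ^∨`) as `Fin 6 → ℂ` using the
basis `e₀∧e₁, e₀∧e₂, e₀∧e₃, e₁∧e₂, e₁∧e₃, e₂∧e₃` (resp. the dual one).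
-/

noncomputable section

open Matrix Complex

/-- Model of `V_ℂ` (and of its dual `V_ℂ^∨`). -/
abbrev Vc : Type := Fin 4 → ℂ

/-- Model of `⋀²V_ℂ` (and of `⋀²V_ℂ^∨`), coordinates w.r.t. the basis
`e₀∧e₁, e₀∧e₂, e₀∧e₃, e₁∧e₂, e₁∧e₃, e₂∧e₃`. -/
abbrev W2 : Type := Fin 6 → ℂ

/-- The wedge product `v ∧ w ∈ ⋀²V_ℂ` of two vectors. -/
def w2 (v w : Vc) : W2 :=
  ![v 0 * w 1 - v 1 * w 0, v 0 * w 2 - v 2 * w 0, v 0 * w 3 - v 3 * w 0,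
    v 1 * w 2 - v 2 * w 1, v 1 * w 3 - v 3 * w 1, v 2 * w 3 - v 3 * w 2]

/-- `vol(a ∧ b)` for `a, b ∈ ⋀²V_ℂ`: the nondegenerate symmetric pairing `( , )` on `⋀²V_ℂ`.
(The same formula computes the dual volume form `vol^∨` on `⋀²V_ℂ^∨` in dual coordinates.) -/
def volp (a b : W2) : ℂ :=
  a 0 * b 5 - a 1 * b 4 + a 2 * b 3 + a 3 * b 2 - a 4 * b 1 + a 5 * b 0

/-- The isomorphism `ι : ⋀²(V_ℂ^∨) → ⋀²V_ℂ` defined by the pairing `( , )`: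
it satisfies `vol (ι Ω ∧ v ∧ w) = Ω(v,w)` for all `v, w`. -/
def iotaMap (Ω : W2) : W2 := ![Ω 5, -Ω 4, Ω 3, Ω 2, -Ω 1, Ω 0]

/-- The map `Φ_θ` on decomposable elements: for `x = (v,g)` and `y = (w,h)` in
`V_ℂ ⊕ V_ℂ^∨`, `Φ_θ(x ∧ y) = (θ₁·v∧w + θ₂·ι(g∧h), θ₃·(g(w) − h(v)))`. -/
def Phi (t1 t2 t3 : ℤ) (x y : Vc × Vc) : W2 × ℂ :=
  ((t1 : ℂ) • w2 x.1 y.1 + (t2 : ℂ) • iotaMap (w2 x.2 y.2),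
    (t3 : ℂ) * (x.2 ⬝ᵥ y.1 - y.2 ⬝ᵥ x.1))

/-- A map `f : V_ℂ → V_ℂ^∨` is antisymmetric if `⟨f v, w⟩ = −⟨f w, v⟩` for all `v, w`. -/
def IsAnti (f : Vc → Vc) : Prop := ∀ v w : Vc, f v ⬝ᵥ w = -(f w ⬝ᵥ v)

/-- The `i`-th standard basis vector. -/
def ef (i : Fin 4) : Vc := fun j => if j = i then 1 else 0

/-- `ω_f ∈ ⋀²(V_ℂ^∨)` attached to a map `f : V_ℂ → V_ℂ^∨`:
`ω_f(v,w) = (1/2)(⟨f w, v⟩ − ⟨f v, w⟩)`, written in coordinates `ω_f(eᵢ,eⱼ)`, `i<j`. -/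
def omegaF (f : Vc → Vc) : W2 :=
  ![(f (ef 1) ⬝ᵥ ef 0 - f (ef 0) ⬝ᵥ ef 1) / 2,
    (f (ef 2) ⬝ᵥ ef 0 - f (ef 0) ⬝ᵥ ef 2) / 2,
    (f (ef 3) ⬝ᵥ ef 0 - f (ef 0) ⬝ᵥ ef 3) / 2,
    (f (ef 2) ⬝ᵥ ef 1 - f (ef 1) ⬝ᵥ ef 2) / 2,
    (f (ef 3) ⬝ᵥ ef 1 - f (ef 1) ⬝ᵥ ef 3) / 2,
    (f (ef 3) ⬝ᵥ ef 2 - f (ef 2) ⬝ᵥ ef 3) / 2]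

/-- The Pfaffian of an antisymmetric map `f : V_ℂ → V_ℂ^∨`, defined by
`vol^∨(ω_f ∧ ω_f) = 2·Pf(f)`. -/
def pfaff (f : Vc → Vc) : ℂ := volp (omegaF f) (omegaF f) / 2

/-- Evaluation against a fixed vector, as a linear functional on the dual. -/
def dotL (u : Vc) : Vc →ₗ[ℂ] ℂ where
  toFun ℓ := ℓ ⬝ᵥ u
  map_add' x y := add_dotProduct x y u
  map_smul' c x := by simp

/-- The annihilator `Ann(U) ⊂ V_ℂ^∨` of a subspace `U ⊂ V_ℂ`. -/
def AnnS (U : Submodule ℂ Vc) : Submodule ℂ Vc :=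
  ⨅ u ∈ (U : Set Vc), LinearMap.ker (dotL u)

/-- Complex conjugation on `V_ℂ`, induced by the integral structure. -/
def cV (v : Vc) : Vc := fun i => (starRingEnd ℂ) (v i)

/-- Complex conjugation on `V_ℂ ⊕ V_ℂ^∨`, induced by the integral structure `V ⊕ V^∨`. -/
def cP (x : Vc × Vc) : Vc × Vc := (cV x.1, cV x.2)

/-- Complex conjugation on `⋀²V_ℂ ⊕ ℂ`, induced by the real structure `⋀²V_ℝ ⊕ ℝ`. -/
def cW (x : W2 × ℂ) : W2 × ℂ := (fun k => (starRingEnd ℂ) (x.1 k), (starRingEnd ℂ) x.2)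

/-- The symmetric bilinear form `(α + x·ζ, β + y·ζ) = vol(α∧β) − m·x·y` on `⋀²V_ℂ ⊕ ℂ`. -/
def Bf (m : ℚ) (x y : W2 × ℂ) : ℂ := volp x.1 y.1 - (m : ℂ) * x.2 * y.2

/-- Membership in (the affine cone over) the period domain
`D = {[σ] : (σ,σ) = 0, (σ,σ̄) > 0}`. -/
def memD (m : ℚ) (σ : W2 × ℂ) : Prop :=
  σ ≠ 0 ∧ Bf m σ σ = 0 ∧ (Bf m σ (cW σ)).im = 0 ∧ 0 < (Bf m σ (cW σ)).re

/-- Model of `⋀³V_ℂ`, with basis `e₁∧e₂∧e₃, e₀∧e₂∧e₃, e₀∧e₁∧e₃, e₀∧e₁∧e₂`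
(indexed by the missing index).  `⋀⁴V_ℂ` is modelled as `ℂ` via `vol`. -/
abbrev V3 : Type := Fin 4 → ℂ

/-- Contraction `ℓ ⌟ η ∈ V_ℂ` of `ℓ ∈ V_ℂ^∨` against `η ∈ ⋀²V_ℂ`. -/
def cont2 (l : Vc) (η : W2) : Vc :=
  ![-(l 1 * η 0) - l 2 * η 1 - l 3 * η 2,
    l 0 * η 0 - l 2 * η 3 - l 3 * η 4,
    l 0 * η 1 + l 1 * η 3 - l 3 * η 5,
    l 0 * η 2 + l 1 * η 4 + l 2 * η 5]

/-- The wedge `η ∧ v ∈ ⋀³V_ℂ` of `η ∈ ⋀²V_ℂ` with `v ∈ V_ℂ`. -/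
def wedge21 (η : W2) (v : Vc) : V3 :=
  ![η 3 * v 3 - η 4 * v 2 + η 5 * v 1,
    η 1 * v 3 - η 2 * v 2 + η 5 * v 0,
    η 0 * v 3 - η 2 * v 1 + η 4 * v 0,
    η 0 * v 2 - η 1 * v 1 + η 3 * v 0]

/-- Contraction `ℓ ⌟ β ∈ ⋀³V_ℂ` of `ℓ ∈ V_ℂ^∨` against `β ∈ ⋀⁴V_ℂ ≅ ℂ`. -/
def cont4 (l : Vc) (β : ℂ) : V3 :=
  ![l 0 * β, -(l 1 * β), l 2 * β, -(l 3 * β)]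

/-- The subspace `Z_{[α+η+β]} ⊂ V_ℂ ⊕ V_ℂ^∨` cut out by
`α·v + ℓ⌟η = 0` (component in `V_ℂ`) and `η∧v + ℓ⌟β = 0` (component in `⋀³V_ℂ`). -/
def Zset (α : ℂ) (η : W2) (β : ℂ) : Set (Vc × Vc) :=
  {p | α • p.1 + cont2 p.2 η = 0 ∧ wedge21 η p.1 + cont4 p.2 β = 0}

lemma vec6_four (a b c d e f : ℂ) : ![a,b,c,d,e,f] 4 = e := rfl

lemma vec6_five (a b c d e f : ℂ) : ![a,b,c,d,e,f] 5 = f := rfl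

/-- **Lemma 3.15 (O'Grady).** Let `α + η + β ∈ ℂ ⊕ ⋀²V_ℂ ⊕ ⋀⁴V_ℂ` satisfy
`vol(η∧η − 2αβ) = 0` and `η∧η ≠ 0`.  Then `Z_{[α+η+β]}` is the graph of a nondegenerate
antisymmetric map `f : V_ℂ → V_ℂ^∨` with `vol(β)·ι(ω_f) = −η`. -/
theorem statement8 (α : ℂ) (η : W2) (β : ℂ)
    (hq : volp η η - 2 * α * β = 0) (hne : volp η η ≠ 0) :
    ∃ f : Vc →ₗ[ℂ] Vc, IsAnti ⇑f ∧ Function.Bijective ⇑f ∧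
      Zset α η β = {p : Vc × Vc | p.2 = f p.1} ∧
      β • iotaMap (omegaF ⇑f) = -η := by
  have hβ : β ≠ 0 := by
    intro h
    apply hne
    rw [h] at hq
    linear_combination hq
  set A : Matrix (Fin 4) (Fin 4) ℂ :=
    !![0, -η 5, η 4, -η 3; η 5, 0, -η 2, η 1; -η 4, η 2, 0, -η 0; η 3, -η 1, η 0, 0] with hA
  set M : Matrix (Fin 4) (Fin 4) ℂ := β⁻¹ • A with hM
  have hMv : ∀ (v : Vc) (i : Fin 4), (M *ᵥ v) i = β⁻¹ * ((A *ᵥ v) i) := by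
    intro v i
    simp [hM, Matrix.smul_mulVec]
  have hAv : ∀ v : Vc, A *ᵥ v =
      ![-(η 5) * v 1 + η 4 * v 2 - η 3 * v 3,
        η 5 * v 0 - η 2 * v 2 + η 1 * v 3,
        -(η 4) * v 0 + η 2 * v 1 - η 0 * v 3,
        η 3 * v 0 - η 1 * v 1 + η 0 * v 2] := by
    intro v
    funext i
    fin_cases i <;>
      simp [hA, Matrix.mulVec, dotProduct, Fin.sum_univ_four] <;> ring
  refine ⟨M.mulVecLin, ?_, ?_, ?_, ?_⟩
  · intro v w
    simp only [Matrix.mulVecLin_apply, dotProduct, Fin.sum_univ_four, hMv, hAv]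
    simp only [Fin.reduceFinMk, Matrix.cons_val_zero, Matrix.cons_val_one, Matrix.head_cons,
      Matrix.cons_val_two, Matrix.tail_cons, Matrix.cons_val_three]
    ring
  · have hdet : M.det ≠ 0 := by
      have hdA : A.det = (η 0 * η 5 - η 1 * η 4 + η 2 * η 3) ^ 2 := by
        rw [hA]
        simp [Matrix.det_succ_row_zero, Fin.sum_univ_succ, Matrix.det_fin_three, Fin.succAbove]
        ring
      have hMd : M.det = β⁻¹ ^ 4 * A.det := by
        rw [hM, Matrix.det_smul]
        simp
      have h2 : η 0 * η 5 - η 1 * η 4 + η 2 * η 3 ≠ 0 := by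
        intro h
        apply hne
        show _ = (0:ℂ)
        simp only [volp]
        linear_combination 2 * h
      rw [hMd, hdA]
      exact mul_ne_zero (pow_ne_zero _ (inv_ne_zero hβ)) (pow_ne_zero _ h2)
    have hu : IsUnit M := (Matrix.isUnit_iff_isUnit_det M).2 (isUnit_iff_ne_zero.2 hdet)
    rw [Matrix.coe_mulVecLin]
    exact ⟨Matrix.mulVec_injective_iff_isUnit.2 hu, Matrix.mulVec_surjective_iff_isUnit.2 hu⟩
  · ext ⟨v, l⟩
    simp only [Zset, Set.mem_setOf_eq, Matrix.mulVecLin_apply]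
    constructor
    · rintro ⟨h1, h2⟩
      funext i
      have e0 := congrFun h2 0
      have e1 := congrFun h2 1
      have e2 := congrFun h2 2
      have e3 := congrFun h2 3
      simp only [wedge21, cont4, Pi.add_apply, Pi.zero_apply, Matrix.cons_val_zero,
        Matrix.cons_val_one, Matrix.head_cons, Matrix.cons_val_two, Matrix.tail_cons,
        Matrix.cons_val_three] at e0 e1 e2 e3
      rw [hMv, hAv]
      fin_cases i
      · show l 0 = _
        simp only [Fin.reduceFinMk, Matrix.cons_val_zero]
        field_simp
        linear_combination e0
      · show l 1 = _
        simp only [Fin.reduceFinMk, Matrix.cons_val_one, Matrix.head_cons, Matrix.cons_val_zero]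
        field_simp
        linear_combination -e1
      · show l 2 = _
        simp only [Fin.reduceFinMk, Matrix.cons_val_two, Matrix.tail_cons, Matrix.head_cons]
        field_simp
        linear_combination e2
      · show l 3 = _
        simp only [Fin.reduceFinMk, Matrix.cons_val_three, Matrix.tail_cons, Matrix.head_cons]
        field_simp
        linear_combination -e3
    · rintro rfl
      have key : η 0 * η 5 - η 1 * η 4 + η 2 * η 3 = α * β := by
        have : volp η η = 2 * α * β := by linear_combination hq
        simp only [volp] at this
        linear_combination this / 2
      have hb : β⁻¹ * β = 1 := inv_mul_cancel₀ hβ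
      constructor
      · funext i
        simp only [cont2, Pi.add_apply, Pi.smul_apply, smul_eq_mul, Pi.zero_apply, hMv, hAv]
        fin_cases i
        · simp only [Fin.reduceFinMk, Matrix.cons_val_zero, Matrix.cons_val_one, Matrix.head_cons,
            Matrix.cons_val_two, Matrix.tail_cons, Matrix.cons_val_three]
          show α * v 0 + _ = 0
          linear_combination (-(β⁻¹ * v 0)) * key - α * v 0 * hb
        · simp only [Fin.reduceFinMk, Matrix.cons_val_zero, Matrix.cons_val_one, Matrix.head_cons,
            Matrix.cons_val_two, Matrix.tail_cons, Matrix.cons_val_three]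
          show α * v 1 + _ = 0
          linear_combination (-(β⁻¹ * v 1)) * key - α * v 1 * hb
        · simp only [Fin.reduceFinMk, Matrix.cons_val_zero, Matrix.cons_val_one, Matrix.head_cons,
            Matrix.cons_val_two, Matrix.tail_cons, Matrix.cons_val_three]
          show α * v 2 + _ = 0
          linear_combination (-(β⁻¹ * v 2)) * key - α * v 2 * hb
        · simp only [Fin.reduceFinMk, Matrix.cons_val_zero, Matrix.cons_val_one, Matrix.head_cons,
            Matrix.cons_val_two, Matrix.tail_cons, Matrix.cons_val_three]
          show α * v 3 + _ = 0
          linear_combination (-(β⁻¹ * v 3)) * key - α * v 3 * hb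
      · funext i
        simp only [wedge21, cont4, Pi.add_apply, Pi.zero_apply, hMv, hAv]
        fin_cases i <;>
          · simp only [Fin.reduceFinMk, Matrix.cons_val_zero, Matrix.cons_val_one, Matrix.head_cons,
              Matrix.cons_val_two, Matrix.tail_cons, Matrix.cons_val_three]
            field_simp
            ring
  · have hval : ∀ i j : Fin 4, (M *ᵥ ef i) ⬝ᵥ ef j = M j i := by
      intro i j
      have h1 : ∀ i : Fin 4, ef i = Pi.single i (1:ℂ) := by
        intro i; funext k; simp [ef, Pi.single_apply]
      simp [h1, Matrix.mulVec_single, dotProduct_single]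
    have hMe : ∀ i j : Fin 4, M i j = β⁻¹ * A i j := by
      intro i j; rw [hM]; simp
    have hω : omegaF ⇑(M.mulVecLin) = β⁻¹ • ![-η 5, η 4, -η 3, -η 2, η 1, -η 0] := by
      funext k
      fin_cases k <;>
        · simp [omegaF, Matrix.mulVecLin_apply, hval, hMe, hA, vec6_four, vec6_five]
          try ring
    rw [hω]
    funext k
    fin_cases k <;>
      · simp [iotaMap, vec6_four, vec6_five]
        try field_simp
end
end

section
/- Let α ∈ ℂ, η ∈ ⋀²V_ℂ, β ∈ ⋀⁴V_ℂ, not all zero, satisfy vol(η∧η − 2αβ) = 0. Then Z := {(v,ℓ) ∈ V_ℂ ⊕ V_ℂ^∨ : α·v + ℓ⌟η + η∧v + ℓ⌟β = 0} is a 4-dimensional complex subspace of V_ℂ ⊕ V_ℂ^∨ on which the quadratic form q(v,ℓ) := 2·ℓ(v) vanishes identically (i.e. Z is a maximal isotropic subspace for q), and Z is the graph of a nondegenerate antisymmetric linear map f : V_ℂ → V_ℂ^∨ if and only if η∧η ≠ 0. -/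
/-!
Concrete model of the linear algebra of O'Grady's "Compact tori associated to hyperkähler
manifolds of Kummer type".

`V` is a free ℤ-module of rank 4; we model `V_ℂ = V ⊗ ℂ` as `Fin 4 → ℂ` (standard integral
structure), and its dual `V_ℂ^∨` also as `Fin 4 → ℂ` via the dot-product pairing
`⟨ℓ, v⟩ = ℓ ⬝ᵥ v` (dual basis coordinates).  The volume form `vol : ⋀⁴V → ℤ` is the one
with `vol(e₀∧e₁∧e₂∧e₃) = 1`.  We model `⋀²V_ℂ` (and `⋀²V_ℂ^∨`) as `Fin 6 → ℂ` using the
basis `e₀∧e₁, e₀∧e₂, e₀∧e₃, e₁∧e₂, e₁∧e₃, e₂∧e₃` (resp. the dual one).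
-/

noncomputable section

open Matrix Complex

section OGAuxSection
set_option linter.unusedTactic false
set_option linter.unreachableTactic false

namespace OGAux
open Matrix

/-- Matrix of `l ↦ cont2 l ξ`. -/
noncomputable def Cm (ξ : W2) : Matrix (Fin 4) (Fin 4) ℂ :=
  !![0, -ξ 0, -ξ 1, -ξ 2; ξ 0, 0, -ξ 3, -ξ 4; ξ 1, ξ 3, 0, -ξ 5; ξ 2, ξ 4, ξ 5, 0]

/-- Matrix of `v ↦ Dneg (wedge21 η v)`. -/
noncomputable def Wm (η : W2) : Matrix (Fin 4) (Fin 4) ℂ :=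
  !![0, η 5, -η 4, η 3; -η 5, 0, η 2, -η 1; η 4, -η 2, 0, η 0; -η 3, η 1, -η 0, 0]

lemma cm_mulVec (ξ : W2) (l : Vc) : Cm ξ *ᵥ l = cont2 l ξ := by
  funext i; fin_cases i <;>
    simp [Cm, cont2, Matrix.mulVec, dotProduct, Fin.sum_univ_four] <;> ring

lemma cm_det (ξ : W2) : (Cm ξ).det = (volp ξ ξ / 2) ^ 2 := by
  simp [Cm, volp, Matrix.det_succ_row_zero, Fin.sum_univ_succ, Fin.succAbove,
    Fin.castSucc, Fin.castAdd, Fin.castLE]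
  ring

lemma cm_transpose (ξ : W2) : (Cm ξ)ᵀ = -Cm ξ := by
  ext i j; fin_cases i <;> fin_cases j <;> simp [Cm]

lemma wm_det (η : W2) : (Wm η).det = (volp η η / 2) ^ 2 := by
  simp [Wm, volp, Matrix.det_succ_row_zero, Fin.sum_univ_succ, Fin.succAbove,
    Fin.castSucc, Fin.castAdd, Fin.castLE]
  ring

lemma wm_transpose (η : W2) : (Wm η)ᵀ = -Wm η := by
  ext i j; fin_cases i <;> fin_cases j <;> simp [Wm]

lemma wm_mulVec (η : W2) (v : Vc) :
    Wm η *ᵥ v = ![wedge21 η v 0, -wedge21 η v 1, wedge21 η v 2, -wedge21 η v 3] := by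
  funext i; fin_cases i <;>
    simp [Wm, wedge21, Matrix.mulVec, dotProduct, Fin.sum_univ_four] <;> ring

lemma cont4_zero (l : Vc) : cont4 l 0 = 0 := by
  funext i; fin_cases i <;> simp [cont4]

lemma wedge21_zero (η : W2) : wedge21 η 0 = 0 := by
  funext i; fin_cases i <;> simp [wedge21]

set_option linter.unreachableTactic false in
set_option linter.unusedTactic false in
set_option maxHeartbeats 1000000 in
lemma ker_param (ξ : W2) (hξ : ξ ≠ 0) (hpf : volp ξ ξ = 0) :
    ∃ g : (Fin 2 → ℂ) →ₗ[ℂ] Vc, Function.Injective g ∧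
      ∀ l : Vc, cont2 l ξ = 0 ↔ l ∈ LinearMap.range g := by
  simp only [volp] at hpf
  obtain ⟨k, hk⟩ : ∃ k, ξ k ≠ 0 := by
    by_contra hc; push_neg at hc; exact hξ (funext hc)
  fin_cases k
  · -- ξ 0 ≠ 0
    have hk' : ξ 0 ≠ 0 := hk
    refine ⟨Matrix.mulVecLin !![ξ 3, ξ 4; -ξ 1, -ξ 2; ξ 0, 0; 0, ξ 0], ?_, ?_⟩
    · rw [← LinearMap.ker_eq_bot, LinearMap.ker_eq_bot']
      intro c hc
      have ha := congrFun hc 2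
      have hb := congrFun hc 3
      simp [Matrix.mulVecLin_apply, Matrix.mulVec, dotProduct, Fin.sum_univ_two] at ha hb
      funext j; fin_cases j
      · first | exact ha.resolve_left hk' | exact ha.resolve_right hk' | exact (mul_eq_zero.mp ha).resolve_left hk' | simpa [hk'] using ha
      · first | exact hb.resolve_left hk' | exact hb.resolve_right hk' | exact (mul_eq_zero.mp hb).resolve_left hk' | simpa [hk'] using hb
    · intro l
      constructor
      · intro h
        have h0 := congrFun h 0; have h1 := congrFun h 1
        have h2 := congrFun h 2; have h3 := congrFun h 3
        simp [cont2] at h0 h1 h2 h3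
        refine ⟨![l 2 / ξ 0, l 3 / ξ 0], ?_⟩
        funext i; fin_cases i
        · simp [Matrix.mulVecLin_apply, Matrix.mulVec, dotProduct, Fin.sum_univ_two]; field_simp; first | linear_combination h1 | linear_combination -h1 | linear_combination ξ 0 * h1 | linear_combination -(ξ 0) * h1 | linear_combination (ξ 0)^2 * h1 | ring1
        · simp [Matrix.mulVecLin_apply, Matrix.mulVec, dotProduct, Fin.sum_univ_two]; field_simp; first | linear_combination h0 | linear_combination -h0 | linear_combination ξ 0 * h0 | linear_combination -(ξ 0) * h0 | linear_combination (ξ 0)^2 * h0 | ring1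
        · simp [Matrix.mulVecLin_apply, Matrix.mulVec, dotProduct, Fin.sum_univ_two]; field_simp
        · simp [Matrix.mulVecLin_apply, Matrix.mulVec, dotProduct, Fin.sum_univ_two]; field_simp
      · rintro ⟨c, rfl⟩
        funext i; fin_cases i <;>
          simp [cont2, Matrix.mulVecLin_apply, Matrix.mulVec, dotProduct,
            Fin.sum_univ_two] <;>
          first | ring1 | linear_combination ((c 0) / 2) * hpf | linear_combination (-(c 0) / 2) * hpf | linear_combination ((c 1) / 2) * hpf | linear_combination (-(c 1) / 2) * hpf
  · -- ξ 1 ≠ 0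
    have hk' : ξ 1 ≠ 0 := hk
    refine ⟨Matrix.mulVecLin !![-ξ 3, ξ 5; ξ 1, 0; -ξ 0, -ξ 2; 0, ξ 1], ?_, ?_⟩
    · rw [← LinearMap.ker_eq_bot, LinearMap.ker_eq_bot']
      intro c hc
      have ha := congrFun hc 1
      have hb := congrFun hc 3
      simp [Matrix.mulVecLin_apply, Matrix.mulVec, dotProduct, Fin.sum_univ_two] at ha hb
      funext j; fin_cases j
      · first | exact ha.resolve_left hk' | exact ha.resolve_right hk' | exact (mul_eq_zero.mp ha).resolve_left hk' | simpa [hk'] using ha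
      · first | exact hb.resolve_left hk' | exact hb.resolve_right hk' | exact (mul_eq_zero.mp hb).resolve_left hk' | simpa [hk'] using hb
    · intro l
      constructor
      · intro h
        have h0 := congrFun h 0; have h1 := congrFun h 1
        have h2 := congrFun h 2; have h3 := congrFun h 3
        simp [cont2] at h0 h1 h2 h3
        refine ⟨![l 1 / ξ 1, l 3 / ξ 1], ?_⟩
        funext i; fin_cases i
        · simp [Matrix.mulVecLin_apply, Matrix.mulVec, dotProduct, Fin.sum_univ_two]; field_simp; first | linear_combination h2 | linear_combination -h2 | linear_combination ξ 1 * h2 | linear_combination -(ξ 1) * h2 | linear_combination (ξ 1)^2 * h2 | ring1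
        · simp [Matrix.mulVecLin_apply, Matrix.mulVec, dotProduct, Fin.sum_univ_two]; field_simp
        · simp [Matrix.mulVecLin_apply, Matrix.mulVec, dotProduct, Fin.sum_univ_two]; field_simp; first | linear_combination h0 | linear_combination -h0 | linear_combination ξ 1 * h0 | linear_combination -(ξ 1) * h0 | linear_combination (ξ 1)^2 * h0 | ring1
        · simp [Matrix.mulVecLin_apply, Matrix.mulVec, dotProduct, Fin.sum_univ_two]; field_simp
      · rintro ⟨c, rfl⟩
        funext i; fin_cases i <;>
          simp [cont2, Matrix.mulVecLin_apply, Matrix.mulVec, dotProduct,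
            Fin.sum_univ_two] <;>
          first | ring1 | linear_combination ((c 0) / 2) * hpf | linear_combination (-(c 0) / 2) * hpf | linear_combination ((c 1) / 2) * hpf | linear_combination (-(c 1) / 2) * hpf
  · -- ξ 2 ≠ 0
    have hk' : ξ 2 ≠ 0 := hk
    refine ⟨Matrix.mulVecLin !![-ξ 4, -ξ 5; ξ 2, 0; 0, ξ 2; -ξ 0, -ξ 1], ?_, ?_⟩
    · rw [← LinearMap.ker_eq_bot, LinearMap.ker_eq_bot']
      intro c hc
      have ha := congrFun hc 1
      have hb := congrFun hc 2
      simp [Matrix.mulVecLin_apply, Matrix.mulVec, dotProduct, Fin.sum_univ_two] at ha hb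
      funext j; fin_cases j
      · first | exact ha.resolve_left hk' | exact ha.resolve_right hk' | exact (mul_eq_zero.mp ha).resolve_left hk' | simpa [hk'] using ha
      · first | exact hb.resolve_left hk' | exact hb.resolve_right hk' | exact (mul_eq_zero.mp hb).resolve_left hk' | simpa [hk'] using hb
    · intro l
      constructor
      · intro h
        have h0 := congrFun h 0; have h1 := congrFun h 1
        have h2 := congrFun h 2; have h3 := congrFun h 3
        simp [cont2] at h0 h1 h2 h3
        refine ⟨![l 1 / ξ 2, l 2 / ξ 2], ?_⟩
        funext i; fin_cases i
        · simp [Matrix.mulVecLin_apply, Matrix.mulVec, dotProduct, Fin.sum_univ_two]; field_simp; first | linear_combination h3 | linear_combination -h3 | linear_combination ξ 2 * h3 | linear_combination -(ξ 2) * h3 | linear_combination (ξ 2)^2 * h3 | ring1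
        · simp [Matrix.mulVecLin_apply, Matrix.mulVec, dotProduct, Fin.sum_univ_two]; field_simp
        · simp [Matrix.mulVecLin_apply, Matrix.mulVec, dotProduct, Fin.sum_univ_two]; field_simp
        · simp [Matrix.mulVecLin_apply, Matrix.mulVec, dotProduct, Fin.sum_univ_two]; field_simp; first | linear_combination h0 | linear_combination -h0 | linear_combination ξ 2 * h0 | linear_combination -(ξ 2) * h0 | linear_combination (ξ 2)^2 * h0 | ring1
      · rintro ⟨c, rfl⟩
        funext i; fin_cases i <;>
          simp [cont2, Matrix.mulVecLin_apply, Matrix.mulVec, dotProduct,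
            Fin.sum_univ_two] <;>
          first | ring1 | linear_combination ((c 0) / 2) * hpf | linear_combination (-(c 0) / 2) * hpf | linear_combination ((c 1) / 2) * hpf | linear_combination (-(c 1) / 2) * hpf
  · -- ξ 3 ≠ 0
    have hk' : ξ 3 ≠ 0 := hk
    refine ⟨Matrix.mulVecLin !![ξ 3, 0; -ξ 1, ξ 5; ξ 0, -ξ 4; 0, ξ 3], ?_, ?_⟩
    · rw [← LinearMap.ker_eq_bot, LinearMap.ker_eq_bot']
      intro c hc
      have ha := congrFun hc 0
      have hb := congrFun hc 3
      simp [Matrix.mulVecLin_apply, Matrix.mulVec, dotProduct, Fin.sum_univ_two] at ha hb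
      funext j; fin_cases j
      · first | exact ha.resolve_left hk' | exact ha.resolve_right hk' | exact (mul_eq_zero.mp ha).resolve_left hk' | simpa [hk'] using ha
      · first | exact hb.resolve_left hk' | exact hb.resolve_right hk' | exact (mul_eq_zero.mp hb).resolve_left hk' | simpa [hk'] using hb
    · intro l
      constructor
      · intro h
        have h0 := congrFun h 0; have h1 := congrFun h 1
        have h2 := congrFun h 2; have h3 := congrFun h 3
        simp [cont2] at h0 h1 h2 h3
        refine ⟨![l 0 / ξ 3, l 3 / ξ 3], ?_⟩
        funext i; fin_cases i
        · simp [Matrix.mulVecLin_apply, Matrix.mulVec, dotProduct, Fin.sum_univ_two]; field_simp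
        · simp [Matrix.mulVecLin_apply, Matrix.mulVec, dotProduct, Fin.sum_univ_two]; field_simp; first | linear_combination h2 | linear_combination -h2 | linear_combination ξ 3 * h2 | linear_combination -(ξ 3) * h2 | linear_combination (ξ 3)^2 * h2 | ring1
        · simp [Matrix.mulVecLin_apply, Matrix.mulVec, dotProduct, Fin.sum_univ_two]; field_simp; first | linear_combination h1 | linear_combination -h1 | linear_combination ξ 3 * h1 | linear_combination -(ξ 3) * h1 | linear_combination (ξ 3)^2 * h1 | ring1
        · simp [Matrix.mulVecLin_apply, Matrix.mulVec, dotProduct, Fin.sum_univ_two]; field_simp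
      · rintro ⟨c, rfl⟩
        funext i; fin_cases i <;>
          simp [cont2, Matrix.mulVecLin_apply, Matrix.mulVec, dotProduct,
            Fin.sum_univ_two] <;>
          first | ring1 | linear_combination ((c 0) / 2) * hpf | linear_combination (-(c 0) / 2) * hpf | linear_combination ((c 1) / 2) * hpf | linear_combination (-(c 1) / 2) * hpf
  · -- ξ 4 ≠ 0
    have hk' : ξ 4 ≠ 0 := hk
    refine ⟨Matrix.mulVecLin !![ξ 4, 0; -ξ 2, -ξ 5; 0, ξ 4; ξ 0, -ξ 3], ?_, ?_⟩
    · rw [← LinearMap.ker_eq_bot, LinearMap.ker_eq_bot']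
      intro c hc
      have ha := congrFun hc 0
      have hb := congrFun hc 2
      simp [Matrix.mulVecLin_apply, Matrix.mulVec, dotProduct, Fin.sum_univ_two] at ha hb
      funext j; fin_cases j
      · first | exact ha.resolve_left hk' | exact ha.resolve_right hk' | exact (mul_eq_zero.mp ha).resolve_left hk' | simpa [hk'] using ha
      · first | exact hb.resolve_left hk' | exact hb.resolve_right hk' | exact (mul_eq_zero.mp hb).resolve_left hk' | simpa [hk'] using hb
    · intro l
      constructor
      · intro h
        have h0 := congrFun h 0; have h1 := congrFun h 1
        have h2 := congrFun h 2; have h3 := congrFun h 3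
        simp [cont2] at h0 h1 h2 h3
        refine ⟨![l 0 / ξ 4, l 2 / ξ 4], ?_⟩
        funext i; fin_cases i
        · simp [Matrix.mulVecLin_apply, Matrix.mulVec, dotProduct, Fin.sum_univ_two]; field_simp
        · simp [Matrix.mulVecLin_apply, Matrix.mulVec, dotProduct, Fin.sum_univ_two]; field_simp; first | linear_combination h3 | linear_combination -h3 | linear_combination ξ 4 * h3 | linear_combination -(ξ 4) * h3 | linear_combination (ξ 4)^2 * h3 | ring1
        · simp [Matrix.mulVecLin_apply, Matrix.mulVec, dotProduct, Fin.sum_univ_two]; field_simp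
        · simp [Matrix.mulVecLin_apply, Matrix.mulVec, dotProduct, Fin.sum_univ_two]; field_simp; first | linear_combination h1 | linear_combination -h1 | linear_combination ξ 4 * h1 | linear_combination -(ξ 4) * h1 | linear_combination (ξ 4)^2 * h1 | ring1
      · rintro ⟨c, rfl⟩
        funext i; fin_cases i <;>
          simp [cont2, Matrix.mulVecLin_apply, Matrix.mulVec, dotProduct,
            Fin.sum_univ_two] <;>
          first | ring1 | linear_combination ((c 0) / 2) * hpf | linear_combination (-(c 0) / 2) * hpf | linear_combination ((c 1) / 2) * hpf | linear_combination (-(c 1) / 2) * hpf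
  · -- ξ 5 ≠ 0
    have hk' : ξ 5 ≠ 0 := hk
    refine ⟨Matrix.mulVecLin !![ξ 5, 0; 0, ξ 5; -ξ 2, -ξ 4; ξ 1, ξ 3], ?_, ?_⟩
    · rw [← LinearMap.ker_eq_bot, LinearMap.ker_eq_bot']
      intro c hc
      have ha := congrFun hc 0
      have hb := congrFun hc 1
      simp [Matrix.mulVecLin_apply, Matrix.mulVec, dotProduct, Fin.sum_univ_two] at ha hb
      funext j; fin_cases j
      · first | exact ha.resolve_left hk' | exact ha.resolve_right hk' | exact (mul_eq_zero.mp ha).resolve_left hk' | simpa [hk'] using ha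
      · first | exact hb.resolve_left hk' | exact hb.resolve_right hk' | exact (mul_eq_zero.mp hb).resolve_left hk' | simpa [hk'] using hb
    · intro l
      constructor
      · intro h
        have h0 := congrFun h 0; have h1 := congrFun h 1
        have h2 := congrFun h 2; have h3 := congrFun h 3
        simp [cont2] at h0 h1 h2 h3
        refine ⟨![l 0 / ξ 5, l 1 / ξ 5], ?_⟩
        funext i; fin_cases i
        · simp [Matrix.mulVecLin_apply, Matrix.mulVec, dotProduct, Fin.sum_univ_two]; field_simp
        · simp [Matrix.mulVecLin_apply, Matrix.mulVec, dotProduct, Fin.sum_univ_two]; field_simp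
        · simp [Matrix.mulVecLin_apply, Matrix.mulVec, dotProduct, Fin.sum_univ_two]; field_simp; first | linear_combination h3 | linear_combination -h3 | linear_combination ξ 5 * h3 | linear_combination -(ξ 5) * h3 | linear_combination (ξ 5)^2 * h3 | ring1
        · simp [Matrix.mulVecLin_apply, Matrix.mulVec, dotProduct, Fin.sum_univ_two]; field_simp; first | linear_combination h2 | linear_combination -h2 | linear_combination ξ 5 * h2 | linear_combination -(ξ 5) * h2 | linear_combination (ξ 5)^2 * h2 | ring1
      · rintro ⟨c, rfl⟩
        funext i; fin_cases i <;>
          simp [cont2, Matrix.mulVecLin_apply, Matrix.mulVec, dotProduct,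
            Fin.sum_univ_two] <;>
          first | ring1 | linear_combination ((c 0) / 2) * hpf | linear_combination (-(c 0) / 2) * hpf | linear_combination ((c 1) / 2) * hpf | linear_combination (-(c 1) / 2) * hpf

lemma iota0 (η : W2) : iotaMap η 0 = η 5 := rfl
lemma iota1 (η : W2) : iotaMap η 1 = -η 4 := rfl
lemma iota2 (η : W2) : iotaMap η 2 = η 3 := rfl
lemma iota3 (η : W2) : iotaMap η 3 = η 2 := rfl
lemma iota4 (η : W2) : iotaMap η 4 = -η 1 := rfl
lemma iota5 (η : W2) : iotaMap η 5 = η 0 := rfl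

lemma volp_iota (η : W2) : volp (iotaMap η) (iotaMap η) = volp η η := by
  simp only [volp, iota0, iota1, iota2, iota3, iota4, iota5]; ring

lemma iota_ne {η : W2} (h : η ≠ 0) : iotaMap η ≠ 0 := by
  intro hc; apply h
  funext k
  have h0 := congrFun hc 0; have h1 := congrFun hc 1; have h2 := congrFun hc 2
  have h3 := congrFun hc 3; have h4 := congrFun hc 4; have h5 := congrFun hc 5
  simp only [iota0, iota1, iota2, iota3, iota4, iota5, Pi.zero_apply, neg_eq_zero] at h0 h1 h2 h3 h4 h5
  fin_cases k <;> simp [*]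

set_option linter.unreachableTactic false in
lemma wedge_iff (η : W2) (v : Vc) : wedge21 η v = 0 ↔ cont2 v (iotaMap η) = 0 := by
  constructor <;> intro h <;>
    [(have h0 := congrFun h 0; have h1 := congrFun h 1;
      have h2 := congrFun h 2; have h3 := congrFun h 3;
      simp [wedge21] at h0 h1 h2 h3);
     (have h0 := congrFun h 0; have h1 := congrFun h 1;
      have h2 := congrFun h 2; have h3 := congrFun h 3;
      simp only [cont2, iota0, iota1, iota2, iota3, iota4, iota5] at h0 h1 h2 h3
      simp [cont2] at h0 h1 h2 h3)] <;>
    (funext i; fin_cases i) <;>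
    simp only [cont2, iota0, iota1, iota2, iota3, iota4, iota5, wedge21] <;>
    simp <;>
    first
      | linear_combination h0 | linear_combination -h0
      | linear_combination h1 | linear_combination -h1
      | linear_combination h2 | linear_combination -h2
      | linear_combination h3 | linear_combination -h3

/-- Isotropy of `Zset`. -/
lemma iso {α : ℂ} {η : W2} {β : ℂ} (h0 : ¬(α = 0 ∧ η = 0 ∧ β = 0))
    {p : Vc × Vc} (hp : p ∈ Zset α η β) : p.2 ⬝ᵥ p.1 = 0 := by
  obtain ⟨h1, h2⟩ := hp
  have e0 := congrFun h1 0; have e1 := congrFun h1 1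
  have e2 := congrFun h1 2; have e3 := congrFun h1 3
  have k0 := congrFun h2 0; have k1 := congrFun h2 1
  have k2 := congrFun h2 2; have k3 := congrFun h2 3
  simp [cont2] at e0 e1 e2 e3
  simp [wedge21, cont4] at k0 k1 k2 k3
  have hdot : p.2 ⬝ᵥ p.1 =
      p.2 0 * p.1 0 + p.2 1 * p.1 1 + p.2 2 * p.1 2 + p.2 3 * p.1 3 := by
    simp [dotProduct, Fin.sum_univ_four]
  rw [hdot]
  by_cases hα : α = 0
  · by_cases hβ : β = 0
    · have hη : η ≠ 0 := fun h => h0 ⟨hα, h, hβ⟩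
      obtain ⟨k, hk⟩ : ∃ k, η k ≠ 0 := by
        by_contra hc; push_neg at hc; exact hη (funext hc)
      set S := p.2 0 * p.1 0 + p.2 1 * p.1 1 + p.2 2 * p.1 2 + p.2 3 * p.1 3 with hS
      have key0 : S * η 0 = 0 := by
        rw [hS]; linear_combination p.2 3 * k2 + p.2 2 * k3 - p.1 1 * e0 + p.1 0 * e1
      have key1 : S * η 1 = 0 := by
        rw [hS]; linear_combination p.2 3 * k1 - p.2 1 * k3 - p.1 2 * e0 + p.1 0 * e2
      have key2 : S * η 2 = 0 := by
        rw [hS]; linear_combination -(p.2 2) * k1 - p.2 1 * k2 - p.1 3 * e0 + p.1 0 * e3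
      have key3 : S * η 3 = 0 := by
        rw [hS]; linear_combination p.2 3 * k0 + p.2 0 * k3 - p.1 2 * e1 + p.1 1 * e2
      have key4 : S * η 4 = 0 := by
        rw [hS]; linear_combination -(p.2 2) * k0 + p.2 0 * k2 - p.1 3 * e1 + p.1 1 * e3
      have key5 : S * η 5 = 0 := by
        rw [hS]; linear_combination p.2 1 * k0 + p.2 0 * k1 - p.1 3 * e2 + p.1 2 * e3
      fin_cases k
      · exact (mul_eq_zero.mp key0).resolve_right hk
      · exact (mul_eq_zero.mp key1).resolve_right hk
      · exact (mul_eq_zero.mp key2).resolve_right hk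
      · exact (mul_eq_zero.mp key3).resolve_right hk
      · exact (mul_eq_zero.mp key4).resolve_right hk
      · exact (mul_eq_zero.mp key5).resolve_right hk
    · have key : β * (p.2 0 * p.1 0 + p.2 1 * p.1 1 + p.2 2 * p.1 2 + p.2 3 * p.1 3) = 0 := by
        linear_combination p.1 0 * k0 - p.1 1 * k1 + p.1 2 * k2 - p.1 3 * k3
      exact (mul_eq_zero.mp key).resolve_left hβ
  · have key : α * (p.2 0 * p.1 0 + p.2 1 * p.1 1 + p.2 2 * p.1 2 + p.2 3 * p.1 3) = 0 := by
      linear_combination p.2 0 * e0 + p.2 1 * e1 + p.2 2 * e2 + p.2 3 * e3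
    exact (mul_eq_zero.mp key).resolve_left hα

lemma cont2_zero (ξ : W2) : cont2 0 ξ = 0 := by
  funext i; fin_cases i <;> simp [cont2]

/-- Matrix of the graph map in the case `α ≠ 0`. -/
noncomputable def Gmat (α : ℂ) (η : W2) : Matrix (Fin 4) (Fin 4) ℂ := (-α⁻¹) • Cm η

/-- Matrix of the graph map in the case `β ≠ 0`. -/
noncomputable def Fmat (β : ℂ) (η : W2) : Matrix (Fin 4) (Fin 4) ℂ := (-β⁻¹) • Wm η

lemma gm_det {α : ℂ} (hα : α ≠ 0) (η : W2) (h : volp η η ≠ 0) : (Gmat α η).det ≠ 0 := by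
  rw [Gmat, Matrix.det_smul, cm_det]
  apply mul_ne_zero
  · apply pow_ne_zero; simp [hα]
  · apply pow_ne_zero; exact div_ne_zero h two_ne_zero

lemma fm_det_zero {β : ℂ} (η : W2) (h : volp η η = 0) : (Fmat β η).det = 0 := by
  rw [Fmat, Matrix.det_smul, wm_det, h]; simp

lemma gm_skew (α : ℂ) (η : W2) : (Gmat α η)ᵀ = -Gmat α η := by
  rw [Gmat, Matrix.transpose_smul, cm_transpose]; ext i j; simp

lemma fm_skew (β : ℂ) (η : W2) : (Fmat β η)ᵀ = -Fmat β η := by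
  rw [Fmat, Matrix.transpose_smul, wm_transpose]; ext i j; simp

set_option linter.unreachableTactic false in
set_option maxHeartbeats 1000000 in
lemma key1 {α : ℂ} (η : W2) {β : ℂ} (hα : α ≠ 0) (hq : volp η η - 2 * α * β = 0)
    (p : Vc × Vc) : p ∈ Zset α η β ↔ p.1 = Gmat α η *ᵥ p.2 := by
  rw [Gmat, Matrix.smul_mulVec, cm_mulVec]
  simp only [volp] at hq
  constructor
  · rintro ⟨h1, h2⟩
    have e0 := congrFun h1 0; have e1 := congrFun h1 1
    have e2 := congrFun h1 2; have e3 := congrFun h1 3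
    simp [cont2] at e0 e1 e2 e3
    funext i; fin_cases i
    · simp [cont2]; field_simp
      first
        | linear_combination e0 | linear_combination -e0
        | linear_combination α * e0 | linear_combination -(α) * e0
    · simp [cont2]; field_simp
      first
        | linear_combination e1 | linear_combination -e1
        | linear_combination α * e1 | linear_combination -(α) * e1
    · simp [cont2]; field_simp
      first
        | linear_combination e2 | linear_combination -e2
        | linear_combination α * e2 | linear_combination -(α) * e2
    · simp [cont2]; field_simp
      first
        | linear_combination e3 | linear_combination -e3
        | linear_combination α * e3 | linear_combination -(α) * e3
  · intro h
    refine ⟨?_, ?_⟩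
    · rw [h, smul_smul, show α * -α⁻¹ = -1 by field_simp, neg_one_smul]
      first | exact neg_add_cancel _ | exact add_left_neg _ | (funext i; simp)
    · rw [h]
      funext i; fin_cases i <;>
        (simp [wedge21, cont4, cont2, Pi.smul_apply, smul_eq_mul]; field_simp) <;>
        first
          | linear_combination (p.2 0 / 2) * hq | linear_combination (-(p.2 0) / 2) * hq
          | linear_combination (p.2 1 / 2) * hq | linear_combination (-(p.2 1) / 2) * hq
          | linear_combination (p.2 2 / 2) * hq | linear_combination (-(p.2 2) / 2) * hq
          | linear_combination (p.2 3 / 2) * hq | linear_combination (-(p.2 3) / 2) * hq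
          | linear_combination (p.2 0 * α / 2) * hq | linear_combination (-(p.2 0) * α / 2) * hq
          | linear_combination (p.2 1 * α / 2) * hq | linear_combination (-(p.2 1) * α / 2) * hq
          | linear_combination (p.2 2 * α / 2) * hq | linear_combination (-(p.2 2) * α / 2) * hq
          | linear_combination (p.2 3 * α / 2) * hq | linear_combination (-(p.2 3) * α / 2) * hq
          | linear_combination (p.2 0 * α ^ 2 / 2) * hq | linear_combination (-(p.2 0) * α ^ 2 / 2) * hq
          | linear_combination (p.2 0 * α ^ 3 / 2) * hq | linear_combination (-(p.2 0) * α ^ 3 / 2) * hq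
          | linear_combination (p.2 1 * α ^ 2 / 2) * hq | linear_combination (-(p.2 1) * α ^ 2 / 2) * hq
          | linear_combination (p.2 1 * α ^ 3 / 2) * hq | linear_combination (-(p.2 1) * α ^ 3 / 2) * hq
          | linear_combination (p.2 2 * α ^ 2 / 2) * hq | linear_combination (-(p.2 2) * α ^ 2 / 2) * hq
          | linear_combination (p.2 2 * α ^ 3 / 2) * hq | linear_combination (-(p.2 2) * α ^ 3 / 2) * hq
          | linear_combination (p.2 3 * α ^ 2 / 2) * hq | linear_combination (-(p.2 3) * α ^ 2 / 2) * hq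
          | linear_combination (p.2 3 * α ^ 3 / 2) * hq | linear_combination (-(p.2 3) * α ^ 3 / 2) * hq

set_option linter.unreachableTactic false in
set_option maxHeartbeats 1000000 in
lemma key2 {α β : ℂ} (η : W2) (hβ : β ≠ 0) (hq : volp η η - 2 * α * β = 0)
    (p : Vc × Vc) : p ∈ Zset α η β ↔ p.2 = Fmat β η *ᵥ p.1 := by
  rw [Fmat, Matrix.smul_mulVec]
  simp only [volp] at hq
  constructor
  · rintro ⟨h1, h2⟩
    have k0 := congrFun h2 0; have k1 := congrFun h2 1
    have k2 := congrFun h2 2; have k3 := congrFun h2 3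
    simp [wedge21, cont4] at k0 k1 k2 k3
    funext i; fin_cases i
    · simp [Wm, Matrix.mulVec, dotProduct, Fin.sum_univ_four]; field_simp
      first
        | linear_combination k0 | linear_combination -k0
        | linear_combination β * k0 | linear_combination -(β) * k0
    · simp [Wm, Matrix.mulVec, dotProduct, Fin.sum_univ_four]; field_simp
      first
        | linear_combination k1 | linear_combination -k1
        | linear_combination β * k1 | linear_combination -(β) * k1
    · simp [Wm, Matrix.mulVec, dotProduct, Fin.sum_univ_four]; field_simp
      first
        | linear_combination k2 | linear_combination -k2
        | linear_combination β * k2 | linear_combination -(β) * k2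
    · simp [Wm, Matrix.mulVec, dotProduct, Fin.sum_univ_four]; field_simp
      first
        | linear_combination k3 | linear_combination -k3
        | linear_combination β * k3 | linear_combination -(β) * k3
  · intro h
    refine ⟨?_, ?_⟩
    · rw [h]
      funext i; fin_cases i <;>
        (simp [cont2, Wm, Matrix.mulVec, dotProduct, Fin.sum_univ_four,
          Pi.smul_apply, smul_eq_mul]; field_simp) <;>
        first
          | linear_combination (p.1 0 / 2) * hq | linear_combination (-(p.1 0) / 2) * hq
          | linear_combination (p.1 1 / 2) * hq | linear_combination (-(p.1 1) / 2) * hq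
          | linear_combination (p.1 2 / 2) * hq | linear_combination (-(p.1 2) / 2) * hq
          | linear_combination (p.1 3 / 2) * hq | linear_combination (-(p.1 3) / 2) * hq
          | linear_combination (p.1 0 * β / 2) * hq | linear_combination (-(p.1 0) * β / 2) * hq
          | linear_combination (p.1 1 * β / 2) * hq | linear_combination (-(p.1 1) * β / 2) * hq
          | linear_combination (p.1 2 * β / 2) * hq | linear_combination (-(p.1 2) * β / 2) * hq
          | linear_combination (p.1 3 * β / 2) * hq | linear_combination (-(p.1 3) * β / 2) * hq
          | linear_combination (p.1 0 * β ^ 2 / 2) * hq | linear_combination (-(p.1 0) * β ^ 2 / 2) * hq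
          | linear_combination (p.1 0 * β ^ 3 / 2) * hq | linear_combination (-(p.1 0) * β ^ 3 / 2) * hq
          | linear_combination (p.1 1 * β ^ 2 / 2) * hq | linear_combination (-(p.1 1) * β ^ 2 / 2) * hq
          | linear_combination (p.1 1 * β ^ 3 / 2) * hq | linear_combination (-(p.1 1) * β ^ 3 / 2) * hq
          | linear_combination (p.1 2 * β ^ 2 / 2) * hq | linear_combination (-(p.1 2) * β ^ 2 / 2) * hq
          | linear_combination (p.1 2 * β ^ 3 / 2) * hq | linear_combination (-(p.1 2) * β ^ 3 / 2) * hq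
          | linear_combination (p.1 3 * β ^ 2 / 2) * hq | linear_combination (-(p.1 3) * β ^ 2 / 2) * hq
          | linear_combination (p.1 3 * β ^ 3 / 2) * hq | linear_combination (-(p.1 3) * β ^ 3 / 2) * hq
          | ring1
    · rw [h]
      funext i; fin_cases i <;>
        (simp [wedge21, cont4, Wm, Matrix.mulVec, dotProduct, Fin.sum_univ_four,
          Pi.smul_apply, smul_eq_mul]; field_simp) <;>
        first
          | ring1 | skip

lemma case1 {α : ℂ} (η : W2) {β : ℂ} (hα : α ≠ 0) (hq : volp η η - 2 * α * β = 0) :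
    (∃ S : Submodule ℂ (Vc × Vc), (S : Set (Vc × Vc)) = Zset α η β ∧
      Module.finrank ℂ S = 4) ∧
    ((∃ f : Vc →ₗ[ℂ] Vc, IsAnti ⇑f ∧ Function.Bijective ⇑f ∧
        Zset α η β = {p : Vc × Vc | p.2 = f p.1}) ↔ volp η η ≠ 0) := by
  constructor
  · refine ⟨LinearMap.range ((Matrix.mulVecLin (Gmat α η)).prod LinearMap.id), ?_, ?_⟩
    · ext p
      simp only [SetLike.mem_coe, LinearMap.mem_range, LinearMap.prod_apply, Pi.prod,
        Matrix.mulVecLin_apply, LinearMap.id_coe, id_eq]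
      constructor
      · rintro ⟨l, hl⟩
        rw [← hl]
        exact (key1 η hα hq _).mpr rfl
      · intro hp
        exact ⟨p.2, Prod.ext ((key1 η hα hq p).mp hp).symm rfl⟩
    · rw [LinearMap.finrank_range_of_inj (fun x y hxy => congrArg Prod.snd hxy)]
      exact Module.finrank_fin_fun ℂ
  · constructor
    · rintro ⟨f, hfa, hfb, hfg⟩ hpf0
      have hβ0 : β = 0 := by
        have h2ab : 2 * α * β = 0 := by linear_combination hpf0 - hq
        simpa [mul_eq_zero, hα] using h2ab
      have hdet : (Cm η).det = 0 := by rw [cm_det, hpf0]; simp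
      obtain ⟨l, hl0, hl⟩ := (Matrix.exists_mulVec_eq_zero_iff).mpr hdet
      rw [cm_mulVec] at hl
      have hmem : ((0 : Vc), l) ∈ Zset α η β := by
        refine ⟨?_, ?_⟩
        · show α • (0 : Vc) + cont2 l η = 0
          rw [hl, smul_zero, add_zero]
        · show wedge21 η 0 + cont4 l β = 0
          rw [wedge21_zero, hβ0, cont4_zero, add_zero]
      rw [hfg] at hmem
      have hl' : l = f 0 := hmem
      rw [map_zero] at hl'
      exact hl0 hl'
    · intro hpf
      have hdet : (Gmat α η).det ≠ 0 := gm_det hα η hpf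
      have hu : IsUnit (Gmat α η).det := isUnit_iff_ne_zero.mpr hdet
      have hinv1 : (Gmat α η)⁻¹ * Gmat α η = 1 := Matrix.nonsing_inv_mul _ hu
      have hinv2 : Gmat α η * (Gmat α η)⁻¹ = 1 := Matrix.mul_nonsing_inv _ hu
      have hli : ∀ x : Vc, Gmat α η *ᵥ ((Gmat α η)⁻¹ *ᵥ x) = x := fun x => by
        rw [Matrix.mulVec_mulVec, hinv2, Matrix.one_mulVec]
      have hri : ∀ x : Vc, (Gmat α η)⁻¹ *ᵥ (Gmat α η *ᵥ x) = x := fun x => by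
        rw [Matrix.mulVec_mulVec, hinv1, Matrix.one_mulVec]
      have hskew' : ((Gmat α η)⁻¹)ᵀ = -((Gmat α η)⁻¹) := by
        rw [Matrix.transpose_nonsing_inv, gm_skew]
        refine Matrix.inv_eq_right_inv ?_
        rw [Matrix.neg_mul, Matrix.mul_neg, neg_neg, hinv2]
      refine ⟨Matrix.mulVecLin (Gmat α η)⁻¹, ?_, ?_, ?_⟩
      · intro v w
        show ((Gmat α η)⁻¹ *ᵥ v) ⬝ᵥ w = -(((Gmat α η)⁻¹ *ᵥ w) ⬝ᵥ v)
        calc ((Gmat α η)⁻¹ *ᵥ v) ⬝ᵥ w = w ⬝ᵥ ((Gmat α η)⁻¹ *ᵥ v) :=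
              dotProduct_comm _ _
          _ = (w ᵥ* (Gmat α η)⁻¹) ⬝ᵥ v := Matrix.dotProduct_mulVec _ _ _
          _ = (((Gmat α η)⁻¹)ᵀ *ᵥ w) ⬝ᵥ v := by rw [Matrix.mulVec_transpose]
          _ = -(((Gmat α η)⁻¹ *ᵥ w) ⬝ᵥ v) := by
              rw [hskew', Matrix.neg_mulVec, neg_dotProduct]
      · exact Function.bijective_iff_has_inverse.mpr
          ⟨fun x => Gmat α η *ᵥ x, fun x => hli x, fun x => hri x⟩
      · ext p
        rw [Set.mem_setOf_eq, Matrix.mulVecLin_apply, key1 η hα hq p]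
        constructor
        · intro h; rw [h, hri]
        · intro h; rw [h, hli]

lemma case2 {α β : ℂ} (η : W2) (hβ : β ≠ 0) (hq : volp η η - 2 * α * β = 0)
    (hpf0 : volp η η = 0) :
    (∃ S : Submodule ℂ (Vc × Vc), (S : Set (Vc × Vc)) = Zset α η β ∧
      Module.finrank ℂ S = 4) ∧
    ((∃ f : Vc →ₗ[ℂ] Vc, IsAnti ⇑f ∧ Function.Bijective ⇑f ∧
        Zset α η β = {p : Vc × Vc | p.2 = f p.1}) ↔ volp η η ≠ 0) := by
  constructor
  · refine ⟨LinearMap.range (LinearMap.prod LinearMap.id (Matrix.mulVecLin (Fmat β η))), ?_, ?_⟩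
    · ext p
      simp only [SetLike.mem_coe, LinearMap.mem_range, LinearMap.prod_apply, Pi.prod,
        Matrix.mulVecLin_apply, LinearMap.id_coe, id_eq]
      constructor
      · rintro ⟨v, hv⟩
        rw [← hv]
        exact (key2 η hβ hq _).mpr rfl
      · intro hp
        exact ⟨p.1, Prod.ext rfl ((key2 η hβ hq p).mp hp).symm⟩
    · rw [LinearMap.finrank_range_of_inj (fun x y hxy => congrArg Prod.fst hxy)]
      exact Module.finrank_fin_fun ℂ
  · refine iff_of_false ?_ (not_ne_iff.mpr hpf0)
    rintro ⟨f, -, hfb, hfg⟩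
    obtain ⟨v, hv0, hv⟩ := (Matrix.exists_mulVec_eq_zero_iff).mpr (fm_det_zero η hpf0)
    have hmem : (v, (0 : Vc)) ∈ Zset α η β := (key2 η hβ hq _).mpr hv.symm
    rw [hfg] at hmem
    have h1 : (0 : Vc) = f v := hmem
    have h2 : f v = f 0 := by rw [map_zero]; exact h1.symm
    exact hv0 (hfb.injective h2)

lemma case3 (η : W2) (hη : η ≠ 0) (hpf0 : volp η η = 0) :
    (∃ S : Submodule ℂ (Vc × Vc), (S : Set (Vc × Vc)) = Zset 0 η 0 ∧
      Module.finrank ℂ S = 4) ∧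
    ((∃ f : Vc →ₗ[ℂ] Vc, IsAnti ⇑f ∧ Function.Bijective ⇑f ∧
        Zset 0 η 0 = {p : Vc × Vc | p.2 = f p.1}) ↔ volp η η ≠ 0) := by
  obtain ⟨g1, hg1i, hg1⟩ := ker_param (iotaMap η) (iota_ne hη) (by rw [volp_iota]; exact hpf0)
  obtain ⟨g2, hg2i, hg2⟩ := ker_param η hη hpf0
  have hmem : ∀ p : Vc × Vc,
      p ∈ Zset 0 η 0 ↔ (cont2 p.1 (iotaMap η) = 0 ∧ cont2 p.2 η = 0) := by
    intro p
    constructor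
    · rintro ⟨h1, h2⟩
      rw [zero_smul, zero_add] at h1
      rw [cont4_zero, add_zero] at h2
      exact ⟨(wedge_iff η p.1).mp h2, h1⟩
    · rintro ⟨ha, hb⟩
      refine ⟨?_, ?_⟩
      · show (0 : ℂ) • p.1 + cont2 p.2 η = 0
        rw [zero_smul, zero_add]; exact hb
      · show wedge21 η p.1 + cont4 p.2 0 = 0
        rw [cont4_zero, add_zero]; exact (wedge_iff η p.1).mpr ha
  constructor
  · refine ⟨LinearMap.range (g1.prodMap g2), ?_, ?_⟩
    · ext p
      simp only [SetLike.mem_coe, LinearMap.mem_range]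
      rw [hmem p]
      constructor
      · rintro ⟨⟨a, b⟩, hab⟩
        rw [← hab]
        simp only [LinearMap.prodMap_apply]
        exact ⟨(hg1 _).mpr ⟨a, rfl⟩, (hg2 _).mpr ⟨b, rfl⟩⟩
      · rintro ⟨ha, hb⟩
        obtain ⟨a, ha'⟩ := (hg1 _).mp ha
        obtain ⟨b, hb'⟩ := (hg2 _).mp hb
        exact ⟨(a, b), by simp only [LinearMap.prodMap_apply]; exact Prod.ext ha' hb'⟩
    · have hinj : Function.Injective (g1.prodMap g2) := by
        intro x y hxy
        simp only [LinearMap.prodMap_apply, Prod.mk.injEq] at hxy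
        · exact Prod.ext (hg1i hxy.1) (hg2i hxy.2)
      rw [LinearMap.finrank_range_of_inj hinj, Module.finrank_prod,
        Module.finrank_fin_fun]
  · refine iff_of_false ?_ (not_ne_iff.mpr hpf0)
    rintro ⟨f, -, -, hfg⟩
    have hl : cont2 (g2 ![1, 0]) η = 0 := (hg2 _).mpr ⟨![1, 0], rfl⟩
    have hl0 : g2 ![1, 0] ≠ 0 := by
      intro hc
      have h10 : (![1, 0] : Fin 2 → ℂ) = 0 := hg2i (by rw [hc, map_zero])
      have := congrFun h10 0
      simp at this
    have hmem' : ((0 : Vc), g2 ![1, 0]) ∈ Zset 0 η 0 :=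
      (hmem _).mpr ⟨by show cont2 (0 : Vc) (iotaMap η) = 0; rw [cont2_zero], hl⟩
    rw [hfg] at hmem'
    have : g2 ![1, 0] = f 0 := hmem'
    rw [map_zero] at this
    exact hl0 this

end OGAux

/-- **Proposition 3.17 (O'Grady).** Let `α + η + β ∈ ℂ ⊕ ⋀²V_ℂ ⊕ ⋀⁴V_ℂ` be nonzero with
`vol(η∧η − 2αβ) = 0` (i.e. `[α+η+β] ∈ 𝐐⁺`).  Then `Z_{[α+η+β]}` is a 4-dimensional
subspace of `V_ℂ ⊕ V_ℂ^∨` on which the quadratic form `q(v,ℓ) = 2·ℓ(v)` vanishes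
identically (a maximal isotropic subspace), and `Z_{[α+η+β]}` is the graph of a
nondegenerate antisymmetric map `f : V_ℂ → V_ℂ^∨` iff `η∧η ≠ 0`. -/
theorem statement9 (α : ℂ) (η : W2) (β : ℂ)
    (h0 : ¬(α = 0 ∧ η = 0 ∧ β = 0))
    (hq : volp η η - 2 * α * β = 0) :
    (∃ S : Submodule ℂ (Vc × Vc), (S : Set (Vc × Vc)) = Zset α η β ∧
      Module.finrank ℂ S = 4) ∧
    (∀ p ∈ Zset α η β, 2 * (p.2 ⬝ᵥ p.1) = 0) ∧
    ((∃ f : Vc →ₗ[ℂ] Vc, IsAnti ⇑f ∧ Function.Bijective ⇑f ∧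
        Zset α η β = {p : Vc × Vc | p.2 = f p.1}) ↔ volp η η ≠ 0) := by
  have hiso : ∀ p ∈ Zset α η β, 2 * (p.2 ⬝ᵥ p.1) = 0 := fun p hp => by
    rw [OGAux.iso h0 hp, mul_zero]
  by_cases hα : α = 0
  · by_cases hβ : β = 0
    · subst hα; subst hβ
      have hη : η ≠ 0 := fun h => h0 ⟨rfl, h, rfl⟩
      have hpf0 : volp η η = 0 := by linear_combination hq
      obtain ⟨hdim, hgr⟩ := OGAux.case3 η hη hpf0
      exact ⟨hdim, hiso, hgr⟩
    · subst hα
      have hpf0 : volp η η = 0 := by linear_combination hq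
      obtain ⟨hdim, hgr⟩ := OGAux.case2 η hβ hq hpf0
      exact ⟨hdim, hiso, hgr⟩
  · obtain ⟨hdim, hgr⟩ := OGAux.case1 η hα hq
    exact ⟨hdim, hiso, hgr⟩

end OGAuxSection
end
end

section
/- For every positive integer e, taking (c,s) = (1,0) and setting g := gcd(3,e), the alternating form E associated to M(1,e,0) has symplectic elementary divisors (1, g, 3e/g, 3e): there exists a ℤ-basis {u₁,…,u₄,w₁,…,w₄} of ℤ⁴ ⊕ ℤ⁴ with E(uᵢ,uⱼ) = E(wᵢ,wⱼ) = 0 and E(uᵢ,wⱼ) = dᵢ·δᵢⱼ, where (d₁,d₂,d₃,d₄) = (1, g, 3e/g, 3e). -/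
open Matrix

/-- The matrix `M(c,e,s)` with rows `(3c,3s,0,0), (3s,ce,0,0), (0,0,c,3s), (0,0,3s,3ce)`. -/
def Mker (c e s : ℤ) : Matrix (Fin 4) (Fin 4) ℤ :=
  !![3*c, 3*s, 0, 0;
     3*s, c*e, 0, 0;
     0,   0,   c, 3*s;
     0,   0,   3*s, 3*c*e]

/-- The alternating ℤ-bilinear form on `L = ℤ⁴ ⊕ ℤ⁴` with `E(αᵢ,αⱼ) = E(βᵢ,βⱼ) = 0` and
`E(αᵢ,βⱼ) = M i j` on the standard bases of the two summands. -/
def Eform (M : Matrix (Fin 4) (Fin 4) ℤ) (x y : (Fin 4 → ℤ) × (Fin 4 → ℤ)) : ℤ :=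
  ∑ i, ∑ j, M i j * (x.1 i * y.2 j - y.1 i * x.2 j)

noncomputable def basisPQ (P P' Q Q' : Matrix (Fin 4) (Fin 4) ℤ)
    (hP : P' * P = 1) (hP' : P * P' = 1) (hQ : Q' * Q = 1) (hQ' : Q * Q' = 1) :
    Module.Basis (Fin 4 ⊕ Fin 4) ℤ ((Fin 4 → ℤ) × (Fin 4 → ℤ)) :=
  ((Pi.basisFun ℤ (Fin 4)).prod (Pi.basisFun ℤ (Fin 4))).map
    ((Matrix.toLin'OfInv hP hP').prodCongr (Matrix.toLin'OfInv hQ hQ'))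

lemma basisPQ_inl (P P' Q Q' : Matrix (Fin 4) (Fin 4) ℤ)
    (hP : P' * P = 1) (hP' : P * P' = 1) (hQ : Q' * Q = 1) (hQ' : Q * Q' = 1) (i : Fin 4) :
    basisPQ P P' Q Q' hP hP' hQ hQ' (Sum.inl i) = (fun k => P k i, 0) := by
  simp [basisPQ, Module.Basis.prod_apply, LinearEquiv.prodCongr_apply, Matrix.toLin'OfInv, Matrix.toLin'_apply, Matrix.mulVec_single]; rfl

lemma basisPQ_inr (P P' Q Q' : Matrix (Fin 4) (Fin 4) ℤ)
    (hP : P' * P = 1) (hP' : P * P' = 1) (hQ : Q' * Q = 1) (hQ' : Q * Q' = 1) (j : Fin 4) :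
    basisPQ P P' Q Q' hP hP' hQ hQ' (Sum.inr j) = (0, fun k => Q k j) := by
  simp [basisPQ, Module.Basis.prod_apply, LinearEquiv.prodCongr_apply, Matrix.toLin'OfInv, Matrix.toLin'_apply, Matrix.mulVec_single]; rfl

lemma Eform_ll (M : Matrix (Fin 4) (Fin 4) ℤ) (u v : Fin 4 → ℤ) :
    Eform M (u, 0) (v, 0) = 0 := by simp [Eform]

lemma Eform_rr (M : Matrix (Fin 4) (Fin 4) ℤ) (u v : Fin 4 → ℤ) :
    Eform M (0, u) (0, v) = 0 := by simp [Eform]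

lemma Eform_lr (M : Matrix (Fin 4) (Fin 4) ℤ) (u w : Fin 4 → ℤ) :
    Eform M (u, 0) (0, w) = ∑ i, ∑ j, M i j * (u i * w j) := by simp [Eform]

set_option maxHeartbeats 1000000 in
/-- Elementary divisors (1, g, 3e/g, 3e), g = gcd(3,e), for the polarization with (c,s) = (1,0) (divisibility 1). -/
theorem statement11 (e : ℤ) (he : 0 < e) :
    ∃ B : Module.Basis (Fin 4 ⊕ Fin 4) ℤ ((Fin 4 → ℤ) × (Fin 4 → ℤ)),
      (∀ i j, Eform (Mker 1 e 0) (B (Sum.inl i)) (B (Sum.inl j)) = 0) ∧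
      (∀ i j, Eform (Mker 1 e 0) (B (Sum.inr i)) (B (Sum.inr j)) = 0) ∧
      (∀ i j, Eform (Mker 1 e 0) (B (Sum.inl i)) (B (Sum.inr j)) =
        if i = j then ![1, (Int.gcd 3 e : ℤ), 3*e / (Int.gcd 3 e : ℤ), 3*e] i else 0) := by
  by_cases h : (3 : ℤ) ∣ e
  · -- g = 3, divisors (1, 3, e, 3e)
    have hg : Int.gcd 3 e = 3 := by have := Int.gcd_eq_left (by norm_num) h; omega
    have hdiv : 3 * e / ((Int.gcd 3 e : ℕ) : ℤ) = e := by
      rw [hg]; push_cast; exact Int.mul_ediv_cancel_left e (by norm_num)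
    -- permutation basis: u = (α₃, α₁, α₂, α₄), w = (β₃, β₁, β₂, β₄)
    set P : Matrix (Fin 4) (Fin 4) ℤ := !![0,1,0,0; 0,0,1,0; 1,0,0,0; 0,0,0,1] with hPdef
    set P' : Matrix (Fin 4) (Fin 4) ℤ := !![0,0,1,0; 1,0,0,0; 0,1,0,0; 0,0,0,1] with hP'def
    have h1 : P' * P = 1 := by
      ext i j; fin_cases i <;> fin_cases j <;>
        simp [hPdef, hP'def, Matrix.mul_apply, Fin.sum_univ_four, Matrix.one_apply, Matrix.vecHead, Matrix.vecTail]
    have h2 : P * P' = 1 := by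
      ext i j; fin_cases i <;> fin_cases j <;>
        simp [hPdef, hP'def, Matrix.mul_apply, Fin.sum_univ_four, Matrix.one_apply, Matrix.vecHead, Matrix.vecTail]
    refine ⟨basisPQ P P' P P' h1 h2 h1 h2, ?_, ?_, ?_⟩
    · intro i j; rw [basisPQ_inl, basisPQ_inl, Eform_ll]
    · intro i j; rw [basisPQ_inr, basisPQ_inr, Eform_rr]
    · intro i j
      rw [basisPQ_inl, basisPQ_inr, Eform_lr, hdiv]
      fin_cases i <;> fin_cases j <;>
        simp [hPdef, hP'def, Mker, Fin.sum_univ_four, hg, Matrix.vecHead, Matrix.vecTail] <;> ring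
  · -- g = 1, divisors (1, 1, 3e, 3e)
    have hg : Int.gcd 3 e = 1 := by
      have h3 : ¬ (3 ∣ e.natAbs) := fun hh => h (Int.dvd_natAbs.mp (Int.natCast_dvd_natCast.mpr hh))
      exact (Nat.Prime.coprime_iff_not_dvd (by norm_num)).mpr h3
    have hdiv : 3 * e / ((Int.gcd 3 e : ℕ) : ℤ) = 3 * e := by rw [hg]; push_cast; exact Int.ediv_one _
    set a : ℤ := Int.gcdA 3 e with ha
    set b : ℤ := Int.gcdB 3 e with hb
    have hbez : 3 * a + e * b = 1 := by
      have h2 := Int.gcd_eq_gcd_ab 3 e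
      rw [hg] at h2; push_cast at h2; rw [← ha, ← hb] at h2; linear_combination -h2
    set P : Matrix (Fin 4) (Fin 4) ℤ := !![0, a, -e, 0; 0, b, 3, 0; 1, 0, 0, 0; 0, 0, 0, 1] with hPdef
    set P' : Matrix (Fin 4) (Fin 4) ℤ := !![0,0,1,0; 3, e, 0, 0; -b, a, 0, 0; 0,0,0,1] with hP'def
    set r : ℤ := -(e * b) with hr
    set Q : Matrix (Fin 4) (Fin 4) ℤ := !![0, 1, r, 0; 0, 1, r+1, 0; 1, 0, 0, 0; 0, 0, 0, 1] with hQdef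
    set Q' : Matrix (Fin 4) (Fin 4) ℤ := !![0,0,1,0; r+1, -r, 0, 0; -1, 1, 0, 0; 0,0,0,1] with hQ'def
    have h1 : P' * P = 1 := by
      ext i j; fin_cases i <;> fin_cases j <;>
        simp [hPdef, hP'def, Matrix.mul_apply, Fin.sum_univ_four, Matrix.one_apply, Matrix.vecHead, Matrix.vecTail] <;>
        first | ring1 | linear_combination hbez | linear_combination -hbez
    have h2 : P * P' = 1 := by
      ext i j; fin_cases i <;> fin_cases j <;>
        simp [hPdef, hP'def, Matrix.mul_apply, Fin.sum_univ_four, Matrix.one_apply, Matrix.vecHead, Matrix.vecTail] <;>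
        first | ring1 | linear_combination hbez | linear_combination -hbez
    have h3 : Q' * Q = 1 := by
      ext i j; fin_cases i <;> fin_cases j <;>
        simp [hQdef, hQ'def, Matrix.mul_apply, Fin.sum_univ_four, Matrix.one_apply, Matrix.vecHead, Matrix.vecTail] <;>
        first | ring1 | linear_combination hbez | linear_combination -hbez
    have h4 : Q * Q' = 1 := by
      ext i j; fin_cases i <;> fin_cases j <;>
        simp [hQdef, hQ'def, Matrix.mul_apply, Fin.sum_univ_four, Matrix.one_apply, Matrix.vecHead, Matrix.vecTail] <;>
        first | ring1 | linear_combination hbez | linear_combination -hbez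
    refine ⟨basisPQ P P' Q Q' h1 h2 h3 h4, ?_, ?_, ?_⟩
    · intro i j; rw [basisPQ_inl, basisPQ_inl, Eform_ll]
    · intro i j; rw [basisPQ_inr, basisPQ_inr, Eform_rr]
    · intro i j
      rw [basisPQ_inl, basisPQ_inr, Eform_lr, hdiv]
      fin_cases i <;> fin_cases j <;>
        simp [hPdef, hQdef, Mker, Fin.sum_univ_four, hg, hr, Matrix.vecHead, Matrix.vecTail] <;>
        first | ring1 | linear_combination hbez | linear_combination -hbez |
          linear_combination (1 - e*b) * hbez | linear_combination (e*b - 1) * hbez |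
          linear_combination (e*b) * hbez | linear_combination (-(e*b)) * hbez |
          linear_combination (3*e) * hbez | linear_combination (-(3*e)) * hbez
end

section
/- For every positive integer e, taking (c,s) = (2,1) and setting g := gcd(3,e), the alternating form E associated to M(2,e,1) has symplectic elementary divisors (1, g, 3(4e−3)/g, 3(4e−3)): there exists a ℤ-basis {u₁,…,u₄,w₁,…,w₄} of ℤ⁴ ⊕ ℤ⁴ with E(uᵢ,uⱼ) = E(wᵢ,wⱼ) = 0 and E(uᵢ,wⱼ) = dᵢ·δᵢⱼ, where (d₁,d₂,d₃,d₄) = (1, g, 3(4e−3)/g, 3(4e−3)). -/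
open Matrix

lemma Eform_left (M : Matrix (Fin 4) (Fin 4) ℤ) (a b : Fin 4 → ℤ) :
    Eform M (a, 0) (b, 0) = 0 := by simp [Eform]

lemma Eform_right (M : Matrix (Fin 4) (Fin 4) ℤ) (a b : Fin 4 → ℤ) :
    Eform M (0, a) (0, b) = 0 := by simp [Eform]

lemma Eform_mixed (M : Matrix (Fin 4) (Fin 4) ℤ) (a b : Fin 4 → ℤ) :
    Eform M (a, 0) (0, b) = ∑ i, ∑ j, M i j * (a i * b j) := by simp [Eform]

/-- Given unimodular `U, V` (with explicit inverses), the rows of `U` paired with `0`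
and `0` paired with the rows of `V` form a basis of `ℤ⁴ × ℤ⁴`. -/
lemma mkBasis (U V U' V' : Matrix (Fin 4) (Fin 4) ℤ)
    (hU : U * U' = 1) (hU' : U' * U = 1) (hV : V * V' = 1) (hV' : V' * V = 1) :
    ∃ B : Module.Basis (Fin 4 ⊕ Fin 4) ℤ ((Fin 4 → ℤ) × (Fin 4 → ℤ)),
      (∀ i, B (Sum.inl i) = (U i, 0)) ∧ (∀ j, B (Sum.inr j) = (0, V j)) := by
  have mk : ∀ (A A' : Matrix (Fin 4) (Fin 4) ℤ), A * A' = 1 → A' * A = 1 →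
      ∃ f : (Fin 4 → ℤ) ≃ₗ[ℤ] (Fin 4 → ℤ), ∀ i, f (Pi.single i 1) = A i := by
    intro A A' h h'
    refine ⟨LinearEquiv.ofLinear (Matrix.toLin' Aᵀ) (Matrix.toLin' A'ᵀ) ?_ ?_, ?_⟩
    · rw [← Matrix.toLin'_mul, ← Matrix.transpose_mul, h', Matrix.transpose_one, Matrix.toLin'_one]
    · rw [← Matrix.toLin'_mul, ← Matrix.transpose_mul, h, Matrix.transpose_one, Matrix.toLin'_one]
    · intro i
      ext j
      simp [Matrix.toLin'_apply, Matrix.mulVec_single]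
  obtain ⟨fU, hfU⟩ := mk U U' hU hU'
  obtain ⟨fV, hfV⟩ := mk V V' hV hV'
  refine ⟨((Pi.basisFun ℤ (Fin 4)).prod (Pi.basisFun ℤ (Fin 4))).map (fU.prodCongr fV), ?_, ?_⟩
  · intro i
    simp [Module.Basis.prod_apply, hfU, Pi.basisFun_apply]
  · intro j
    simp [Module.Basis.prod_apply, hfV, Pi.basisFun_apply]

/- Case `e = 3k`. -/
def U0 (k : ℤ) : Matrix (Fin 4) (Fin 4) ℤ := !![0,0,-1,1; 0,1,0,0; -1,2,0,0; 0,0,-3,2]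
def U0' (k : ℤ) : Matrix (Fin 4) (Fin 4) ℤ := !![0,2,-1,0; 0,1,0,0; 2,0,0,-1; 3,0,0,-1]
def V0 (k : ℤ) : Matrix (Fin 4) (Fin 4) ℤ := !![0,0,1,0; 1,0,0,0; -2*k,1,0,0; 0,0,(3-18*k),1]
def V0' (k : ℤ) : Matrix (Fin 4) (Fin 4) ℤ := !![0,1,0,0; 0,2*k,1,0; 1,0,0,0; (18*k-3),0,0,1]

/- Case `e = 3k+1`. -/
def U1 (k : ℤ) : Matrix (Fin 4) (Fin 4) ℤ := !![0,0,-1,1; 0,1,0,0; -1,(12*k+3),0,0; 0,0,-3,2]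
def U1' (k : ℤ) : Matrix (Fin 4) (Fin 4) ℤ := !![0,(12*k+3),-1,0; 0,1,0,0; 2,0,0,-1; 3,0,0,-1]
def V1 (k : ℤ) : Matrix (Fin 4) (Fin 4) ℤ := !![0,0,1,0; (2*k+1),-1,0,0; (-6*k-2),3,0,0; 0,0,(-18*k-3),1]
def V1' (k : ℤ) : Matrix (Fin 4) (Fin 4) ℤ := !![0,3,1,0; 0,(6*k+2),(2*k+1),0; 1,0,0,0; (18*k+3),0,0,1]

/- Case `e = 3k+2`. -/
def U2 (k : ℤ) : Matrix (Fin 4) (Fin 4) ℤ := !![0,0,-1,1; 0,1,0,0; 1,(12*k+3),0,0; 0,0,-3,2]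
def U2' (k : ℤ) : Matrix (Fin 4) (Fin 4) ℤ := !![0,(-12*k-3),1,0; 0,1,0,0; 2,0,0,-1; 3,0,0,-1]
def V2 (k : ℤ) : Matrix (Fin 4) (Fin 4) ℤ := !![0,0,1,0; (-2*k-1),1,0,0; (6*k+4),-3,0,0; 0,0,(-18*k-9),1]
def V2' (k : ℤ) : Matrix (Fin 4) (Fin 4) ℤ := !![0,3,1,0; 0,(6*k+4),(2*k+1),0; 1,0,0,0; (18*k+9),0,0,1]

set_option maxHeartbeats 1000000 in
lemma inv_U0_U0i (k : ℤ) : U0 k * U0' k = 1 := by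
  ext i j; fin_cases i <;> fin_cases j <;>
    simp [Matrix.mul_apply, Fin.sum_univ_four, U0, U0', V0, V0', Matrix.one_apply,
      Matrix.vecHead, Matrix.vecTail] <;> ring

set_option maxHeartbeats 1000000 in
lemma inv_U0i_U0 (k : ℤ) : U0' k * U0 k = 1 := by
  ext i j; fin_cases i <;> fin_cases j <;>
    simp [Matrix.mul_apply, Fin.sum_univ_four, U0, U0', V0, V0', Matrix.one_apply,
      Matrix.vecHead, Matrix.vecTail] <;> ring

set_option maxHeartbeats 1000000 in
lemma inv_V0_V0i (k : ℤ) : V0 k * V0' k = 1 := by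
  ext i j; fin_cases i <;> fin_cases j <;>
    simp [Matrix.mul_apply, Fin.sum_univ_four, U0, U0', V0, V0', Matrix.one_apply,
      Matrix.vecHead, Matrix.vecTail] <;> ring

set_option maxHeartbeats 1000000 in
lemma inv_V0i_V0 (k : ℤ) : V0' k * V0 k = 1 := by
  ext i j; fin_cases i <;> fin_cases j <;>
    simp [Matrix.mul_apply, Fin.sum_univ_four, U0, U0', V0, V0', Matrix.one_apply,
      Matrix.vecHead, Matrix.vecTail] <;> ring

set_option maxHeartbeats 1000000 in
lemma inv_U1_U1i (k : ℤ) : U1 k * U1' k = 1 := by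
  ext i j; fin_cases i <;> fin_cases j <;>
    simp [Matrix.mul_apply, Fin.sum_univ_four, U1, U1', V1, V1', Matrix.one_apply,
      Matrix.vecHead, Matrix.vecTail] <;> ring

set_option maxHeartbeats 1000000 in
lemma inv_U1i_U1 (k : ℤ) : U1' k * U1 k = 1 := by
  ext i j; fin_cases i <;> fin_cases j <;>
    simp [Matrix.mul_apply, Fin.sum_univ_four, U1, U1', V1, V1', Matrix.one_apply,
      Matrix.vecHead, Matrix.vecTail] <;> ring

set_option maxHeartbeats 1000000 in
lemma inv_V1_V1i (k : ℤ) : V1 k * V1' k = 1 := by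
  ext i j; fin_cases i <;> fin_cases j <;>
    simp [Matrix.mul_apply, Fin.sum_univ_four, U1, U1', V1, V1', Matrix.one_apply,
      Matrix.vecHead, Matrix.vecTail] <;> ring

set_option maxHeartbeats 1000000 in
lemma inv_V1i_V1 (k : ℤ) : V1' k * V1 k = 1 := by
  ext i j; fin_cases i <;> fin_cases j <;>
    simp [Matrix.mul_apply, Fin.sum_univ_four, U1, U1', V1, V1', Matrix.one_apply,
      Matrix.vecHead, Matrix.vecTail] <;> ring

set_option maxHeartbeats 1000000 in
lemma inv_U2_U2i (k : ℤ) : U2 k * U2' k = 1 := by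
  ext i j; fin_cases i <;> fin_cases j <;>
    simp [Matrix.mul_apply, Fin.sum_univ_four, U2, U2', V2, V2', Matrix.one_apply,
      Matrix.vecHead, Matrix.vecTail] <;> ring

set_option maxHeartbeats 1000000 in
lemma inv_U2i_U2 (k : ℤ) : U2' k * U2 k = 1 := by
  ext i j; fin_cases i <;> fin_cases j <;>
    simp [Matrix.mul_apply, Fin.sum_univ_four, U2, U2', V2, V2', Matrix.one_apply,
      Matrix.vecHead, Matrix.vecTail] <;> ring

set_option maxHeartbeats 1000000 in
lemma inv_V2_V2i (k : ℤ) : V2 k * V2' k = 1 := by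
  ext i j; fin_cases i <;> fin_cases j <;>
    simp [Matrix.mul_apply, Fin.sum_univ_four, U2, U2', V2, V2', Matrix.one_apply,
      Matrix.vecHead, Matrix.vecTail] <;> ring

set_option maxHeartbeats 1000000 in
lemma inv_V2i_V2 (k : ℤ) : V2' k * V2 k = 1 := by
  ext i j; fin_cases i <;> fin_cases j <;>
    simp [Matrix.mul_apply, Fin.sum_univ_four, U2, U2', V2, V2', Matrix.one_apply,
      Matrix.vecHead, Matrix.vecTail] <;> ring

set_option maxHeartbeats 1000000 in
/-- Elementary divisors (1, g, 3(4e−3)/g, 3(4e−3)), g = gcd(3,e), for the polarization with (c,s) = (2,1) (divisibility 2). -/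
theorem statement12 (e : ℤ) (he : 0 < e) :
    ∃ B : Module.Basis (Fin 4 ⊕ Fin 4) ℤ ((Fin 4 → ℤ) × (Fin 4 → ℤ)),
      (∀ i j, Eform (Mker 2 e 1) (B (Sum.inl i)) (B (Sum.inl j)) = 0) ∧
      (∀ i j, Eform (Mker 2 e 1) (B (Sum.inr i)) (B (Sum.inr j)) = 0) ∧
      (∀ i j, Eform (Mker 2 e 1) (B (Sum.inl i)) (B (Sum.inr j)) =
        if i = j then ![1, (Int.gcd 3 e : ℤ), 3*(4*e-3) / (Int.gcd 3 e : ℤ), 3*(4*e-3)] i else 0) := by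
  have hcase : e % 3 = 0 ∨ e % 3 = 1 ∨ e % 3 = 2 := by omega
  rcases hcase with h | h | h
  · -- e = 3k
    obtain ⟨k, rfl⟩ : ∃ k, e = 3 * k := ⟨e / 3, by omega⟩
    have hg : ((Int.gcd 3 (3 * k) : ℕ) : ℤ) = 3 := by
      have : Int.gcd 3 (3 * k) = 3 := by
        have := Int.gcd_mul_left 3 1 k
        simpa using this
      rw [this]; norm_num
    have hdiv : (3 * (4 * (3 * k) - 3)) / ((Int.gcd 3 (3 * k) : ℕ) : ℤ) = 12 * k - 3 := by
      rw [hg, show (3 * (4 * (3 * k) - 3) : ℤ) = 3 * (12 * k - 3) by ring,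
        Int.mul_ediv_cancel_left _ (by norm_num)]
    obtain ⟨B, hBl, hBr⟩ := mkBasis (U0 k) (V0 k) (U0' k) (V0' k)
      (inv_U0_U0i k) (inv_U0i_U0 k) (inv_V0_V0i k) (inv_V0i_V0 k)
    refine ⟨B, fun i j => by rw [hBl, hBl]; exact Eform_left _ _ _,
      fun i j => by rw [hBr, hBr]; exact Eform_right _ _ _, fun i j => ?_⟩
    rw [hBl, hBr, Eform_mixed, hdiv, hg]
    fin_cases i <;> fin_cases j <;>
      simp [Mker, U0, V0, Fin.sum_univ_four, Matrix.vecHead, Matrix.vecTail] <;> ring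
  · -- e = 3k+1
    obtain ⟨k, rfl⟩ : ∃ k, e = 3 * k + 1 := ⟨e / 3, by omega⟩
    have hg : ((Int.gcd 3 (3 * k + 1) : ℕ) : ℤ) = 1 := by
      have : Int.gcd 3 (3 * k + 1) = 1 :=
        Int.isCoprime_iff_gcd_eq_one.mp ⟨-k, 1, by ring⟩
      rw [this]; norm_num
    obtain ⟨B, hBl, hBr⟩ := mkBasis (U1 k) (V1 k) (U1' k) (V1' k)
      (inv_U1_U1i k) (inv_U1i_U1 k) (inv_V1_V1i k) (inv_V1i_V1 k)
    refine ⟨B, fun i j => by rw [hBl, hBl]; exact Eform_left _ _ _,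
      fun i j => by rw [hBr, hBr]; exact Eform_right _ _ _, fun i j => ?_⟩
    rw [hBl, hBr, Eform_mixed, hg, Int.ediv_one]
    fin_cases i <;> fin_cases j <;>
      simp [Mker, U1, V1, Fin.sum_univ_four, Matrix.vecHead, Matrix.vecTail] <;> ring
  · -- e = 3k+2
    obtain ⟨k, rfl⟩ : ∃ k, e = 3 * k + 2 := ⟨e / 3, by omega⟩
    have hg : ((Int.gcd 3 (3 * k + 2) : ℕ) : ℤ) = 1 := by
      have : Int.gcd 3 (3 * k + 2) = 1 :=
        Int.isCoprime_iff_gcd_eq_one.mp ⟨-(2*k+1), 2, by ring⟩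
      rw [this]; norm_num
    obtain ⟨B, hBl, hBr⟩ := mkBasis (U2 k) (V2 k) (U2' k) (V2' k)
      (inv_U2_U2i k) (inv_U2i_U2 k) (inv_V2_V2i k) (inv_V2i_V2 k)
    refine ⟨B, fun i j => by rw [hBl, hBl]; exact Eform_left _ _ _,
      fun i j => by rw [hBr, hBr]; exact Eform_right _ _ _, fun i j => ?_⟩
    rw [hBl, hBr, Eform_mixed, hg, Int.ediv_one]
    fin_cases i <;> fin_cases j <;>
      simp [Mker, U2, V2, Fin.sum_univ_four, Matrix.vecHead, Matrix.vecTail] <;> ring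
end

section
/- For every positive integer e, taking (c,s) = (6,1), the alternating form E associated to M(6,e,1) has symplectic elementary divisors (3, 3, 3(12e−1), 3(12e−1)): there exists a ℤ-basis {u₁,…,u₄,w₁,…,w₄} of ℤ⁴ ⊕ ℤ⁴ with E(uᵢ,uⱼ) = E(wᵢ,wⱼ) = 0 and E(uᵢ,wⱼ) = dᵢ·δᵢⱼ, where (d₁,d₂,d₃,d₄) = (3, 3, 3(12e−1), 3(12e−1)). -/
open Matrix

/-- Transpose of the row-operation matrix `P`. -/
def PtM : Matrix (Fin 4) (Fin 4) ℤ := !![0,0,-1,0; 1,0,6,0; 0,0,0,-1; 0,1,0,2]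

/-- Transpose of `P⁻¹`. -/
def PtiM : Matrix (Fin 4) (Fin 4) ℤ := !![6,1,0,0; 0,0,2,1; -1,0,0,0; 0,0,-1,0]

/-- Transpose of the column-operation matrix `Q`. -/
def QtM (e : ℤ) : Matrix (Fin 4) (Fin 4) ℤ := !![1,0,-2*e,0; 0,0,1,0; 0,1,0,-6*e; 0,0,0,1]

/-- Transpose of `Q⁻¹`. -/
def QtiM (e : ℤ) : Matrix (Fin 4) (Fin 4) ℤ := !![1,2*e,0,0; 0,0,1,6*e; 0,1,0,0; 0,0,0,1]

lemma Pt_mul_Pti : PtM * PtiM = 1 := by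
  show _ = (1 : Matrix (Fin 4) (Fin 4) ℤ)
  ext i j
  fin_cases i <;> fin_cases j <;>
    simp [PtM, PtiM, Matrix.mul_apply, Fin.sum_univ_four, Matrix.one_apply, Matrix.vecHead, Matrix.vecTail]

lemma Pti_mul_Pt : PtiM * PtM = 1 := by
  ext i j
  fin_cases i <;> fin_cases j <;>
    simp [PtM, PtiM, Matrix.mul_apply, Fin.sum_univ_four, Matrix.one_apply, Matrix.vecHead, Matrix.vecTail]

lemma Qt_mul_Qti (e : ℤ) : QtM e * QtiM e = 1 := by
  ext i j
  fin_cases i <;> fin_cases j <;>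
    simp [QtM, QtiM, Matrix.mul_apply, Fin.sum_univ_four, Matrix.one_apply, Matrix.vecHead, Matrix.vecTail]

lemma Qti_mul_Qt (e : ℤ) : QtiM e * QtM e = 1 := by
  ext i j
  fin_cases i <;> fin_cases j <;>
    simp [QtM, QtiM, Matrix.mul_apply, Fin.sum_univ_four, Matrix.one_apply, Matrix.vecHead, Matrix.vecTail]

/-- Linear equivalence from an integer matrix with explicit two-sided inverse. -/
def equivOfMats (A B : Matrix (Fin 4) (Fin 4) ℤ) (h1 : A * B = 1) (h2 : B * A = 1) :
    (Fin 4 → ℤ) ≃ₗ[ℤ] (Fin 4 → ℤ) :=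
  LinearEquiv.ofLinear (Matrix.toLin' A) (Matrix.toLin' B)
    (by rw [← Matrix.toLin'_mul, h1, Matrix.toLin'_one])
    (by rw [← Matrix.toLin'_mul, h2, Matrix.toLin'_one])

lemma Eform_left_zero (M : Matrix (Fin 4) (Fin 4) ℤ) (x y : (Fin 4 → ℤ) × (Fin 4 → ℤ))
    (hx : x.2 = 0) (hy : y.2 = 0) : Eform M x y = 0 := by
  simp [Eform, hx, hy]

lemma Eform_right_zero (M : Matrix (Fin 4) (Fin 4) ℤ) (x y : (Fin 4 → ℤ) × (Fin 4 → ℤ))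
    (hx : x.1 = 0) (hy : y.1 = 0) : Eform M x y = 0 := by
  simp [Eform, hx, hy]

/-- Elementary divisors (3, 3, 3(12e−1), 3(12e−1)) for the polarization with (c,s) = (6,1) (divisibility 6). -/
theorem statement14 (e : ℤ) (he : 0 < e) :
    ∃ B : Module.Basis (Fin 4 ⊕ Fin 4) ℤ ((Fin 4 → ℤ) × (Fin 4 → ℤ)),
      (∀ i j, Eform (Mker 6 e 1) (B (Sum.inl i)) (B (Sum.inl j)) = 0) ∧
      (∀ i j, Eform (Mker 6 e 1) (B (Sum.inr i)) (B (Sum.inr j)) = 0) ∧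
      (∀ i j, Eform (Mker 6 e 1) (B (Sum.inl i)) (B (Sum.inr j)) =
        if i = j then ![3, 3, 3*(12*e-1), 3*(12*e-1)] i else 0) := by
  classical
  set fP := equivOfMats PtM PtiM Pt_mul_Pti Pti_mul_Pt with hfP
  set fQ := equivOfMats (QtM e) (QtiM e) (Qt_mul_Qti e) (Qti_mul_Qt e) with hfQ
  set B0 : Module.Basis (Fin 4 ⊕ Fin 4) ℤ ((Fin 4 → ℤ) × (Fin 4 → ℤ)) :=
    (Pi.basisFun ℤ (Fin 4)).prod (Pi.basisFun ℤ (Fin 4)) with hB0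
  refine ⟨B0.map (fP.prodCongr fQ), ?_, ?_, ?_⟩
  · intro i j
    apply Eform_left_zero
    · simp [hB0, Module.Basis.prod_apply, Pi.basisFun_apply]
    · simp [hB0, Module.Basis.prod_apply, Pi.basisFun_apply]
  · intro i j
    apply Eform_right_zero
    · simp [hB0, Module.Basis.prod_apply, Pi.basisFun_apply]
    · simp [hB0, Module.Basis.prod_apply, Pi.basisFun_apply]
  · intro i j
    have h1 : (B0.map (fP.prodCongr fQ) (Sum.inl i)) =
        (PtM.mulVec (Pi.single i 1), 0) := by
      simp [hB0, Module.Basis.prod_apply, Pi.basisFun_apply, hfP, equivOfMats,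
        Matrix.toLin'_apply]
    have h2 : (B0.map (fP.prodCongr fQ) (Sum.inr j)) =
        (0, (QtM e).mulVec (Pi.single j 1)) := by
      simp [hB0, Module.Basis.prod_apply, Pi.basisFun_apply, hfQ, equivOfMats,
        Matrix.toLin'_apply]
    rw [h1, h2]
    fin_cases i <;> fin_cases j <;>
      simp [Eform, Mker, PtM, QtM, Matrix.mulVec, dotProduct, Matrix.vecHead, Matrix.vecTail,
        Fin.sum_univ_four, Pi.single_apply] <;> ring
end

section
/- Assume θ₁, θ₂, θ₃ are all nonzero, m ∈ ℚ is positive, θ₁·θ₂ = 2m·θ₃², and the setup of the context. Then: (i) Ψ maps the rational subspace V_ℚ ⊕ V_ℚ^∨ onto itself; (ii) Ψ∘Ψ = −(N − b²)·Id, where N − b² = (θ₃²/(c⁴e²θ₂²))·(2m·c²e − s²) = (θ₃²/(c⁴e²θ₂²))·m·(h,h)^∨ > 0; (iii) for every [σ] ∈ D_h one has Ψ(H^{1,0}_{[σ]}(θ)) ⊆ H^{1,0}_{[σ]}(θ), and the restriction of Ψ to H^{1,0}_{[σ]}(θ) has the two eigenvalues ±i·√(N − b²), each with a 2-dimensional eigenspace.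 -/
/-!
Concrete model of the linear algebra of O'Grady's "Compact tori associated to hyperkähler
manifolds of Kummer type".

`V` is a free ℤ-module of rank 4; we model `V_ℂ = V ⊗ ℂ` as `Fin 4 → ℂ` (standard integral
structure), and its dual `V_ℂ^∨` also as `Fin 4 → ℂ` via the dot-product pairing
`⟨ℓ, v⟩ = ℓ ⬝ᵥ v` (dual basis coordinates).  The volume form `vol : ⋀⁴V → ℤ` is the one
with `vol(e₀∧e₁∧e₂∧e₃) = 1`.  We model `⋀²V_ℂ` (and `⋀²V_ℂ^∨`) as `Fin 6 → ℂ` using the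
basis `e₀∧e₁, e₀∧e₂, e₀∧e₃, e₁∧e₂, e₁∧e₃, e₂∧e₃` (resp. the dual one).
-/

noncomputable section

open Matrix Complex

/-- The subspace `H^{1,0}_{[σ]}(θ) ⊂ V_ℂ ⊕ V_ℂ^∨` attached to `[σ] ∈ D`:
if the `ζ`-component of `σ` is nonzero, it is the graph of the (unique) nondegenerate
antisymmetric `f : V_ℂ → V_ℂ^∨` with `ι(ω_f) = α`, where `σ` is rescaled so that
`σ = θ₂·α − 2θ₃·ζ`; if `σ ∈ ⋀²V_ℂ` (then `σ` is decomposable), it is `U ⊕ Ann(U)` for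
the unique 2-dimensional `U ⊂ V_ℂ` with `⋀²U = ℂσ`. -/
def IsH10 (t1 t2 t3 : ℤ) (σ : W2 × ℂ) (H : Submodule ℂ (Vc × Vc)) : Prop :=
  (σ.2 ≠ 0 ∧ ∃ f : Vc →ₗ[ℂ] Vc, IsAnti ⇑f ∧ Function.Bijective ⇑f ∧
      iotaMap (omegaF ⇑f) = ((-2 * (t3 : ℂ)) / ((t2 : ℂ) * σ.2)) • σ.1 ∧
      H = LinearMap.graph f) ∨
  (σ.2 = 0 ∧ ∃ U : Submodule ℂ Vc, Module.finrank ℂ U = 2 ∧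
      (∃ v w : Vc, U = Submodule.span ℂ {v, w} ∧ ∃ t : ℂ, t ≠ 0 ∧ w2 v w = t • σ.1) ∧
      H = U.prod (AnnS U))

/-- Evaluation of a class `h ∈ (⋀²V ⊕ ℤ)^∨` (given by its integral coordinates
`hW : Fin 6 → ℤ` in the dual basis, and `hz ∈ ℤ` dual to `ζ`) on `⋀²V_ℂ ⊕ ℂ`. -/
def hpC (hW : Fin 6 → ℤ) (hz : ℤ) (x : W2 × ℂ) : ℂ :=
  (∑ k, (hW k : ℂ) * x.1 k) + (hz : ℂ) * x.2

/-- The value `(h,h)^∨` of the dual of the form `( , )` on `h` (a rational number). -/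
def dualSq (m : ℚ) (hW : Fin 6 → ℤ) (hz : ℤ) : ℚ :=
  ((hW 0 * hW 5 - hW 1 * hW 4 + hW 2 * hW 3 +
    hW 3 * hW 2 - hW 4 * hW 1 + hW 5 * hW 0 : ℤ) : ℚ) - (hz : ℚ) ^ 2 / m

/-- The class `h₀ = c(e·v₁^∨∧v₂^∨ + v₃^∨∧v₄^∨) ∈ ⋀²V^∨`, in dual coordinates. -/
def h0v (c e : ℤ) : W2 := ![(c : ℂ) * (e : ℂ), 0, 0, 0, 0, (c : ℂ)]

/-- Evaluation of `h = h₀ + s·ζ^∨ ∈ (⋀²V ⊕ ℤ)^∨` on `⋀²V_ℂ ⊕ ℂ`. -/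
def hev (c e s : ℤ) (x : W2 × ℂ) : ℂ :=
  (c : ℂ) * (e : ℂ) * x.1 0 + (c : ℂ) * x.1 5 + (s : ℂ) * x.2

/-- `N = θ₁/(c²·e·θ₂)`. -/
def Nq (t1 t2 c e : ℤ) : ℚ := (t1 : ℚ) / ((c : ℚ) ^ 2 * (e : ℚ) * (t2 : ℚ))

/-- `b = s·θ₃/(c²·e·θ₂)`. -/
def bq (t2 t3 c e s : ℤ) : ℚ := (s : ℚ) * (t3 : ℚ) / ((c : ℚ) ^ 2 * (e : ℚ) * (t2 : ℚ))

/-- The endomorphism `Ψ(v,ℓ) = (g⁻¹(ℓ) − b·v, b·ℓ − N·g(v))` of `V_ℂ ⊕ V_ℂ^∨`. -/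
def PsiL (g : Vc ≃ₗ[ℂ] Vc) (N b : ℚ) : (Vc × Vc) →ₗ[ℂ] Vc × Vc :=
  LinearMap.prod
    (g.symm.toLinearMap ∘ₗ LinearMap.snd ℂ Vc Vc - (b : ℂ) • LinearMap.fst ℂ Vc Vc)
    ((b : ℂ) • LinearMap.snd ℂ Vc Vc - (N : ℂ) • (g.toLinearMap ∘ₗ LinearMap.fst ℂ Vc Vc))

/-- The rational subspace `V_ℚ ⊕ V_ℚ^∨ ⊂ V_ℂ ⊕ V_ℂ^∨`. -/
def ratSet : Set (Vc × Vc) :=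
  {p | (∀ i, ∃ q : ℚ, p.1 i = (q : ℂ)) ∧ (∀ i, ∃ q : ℚ, p.2 i = (q : ℂ))}

/-- The complex number `i·√(N − b²)`. -/
def sqNb (N b : ℚ) : ℂ := Complex.I * ((Real.sqrt ((N - b ^ 2 : ℚ) : ℝ) : ℝ) : ℂ)

/-- The alternating form `⟨x,y⟩_{θ,h} = ⟨h, Φ_θ(x∧y)⟩` on `V_ℂ ⊕ V_ℂ^∨`. -/
def Eth (t1 t2 t3 c e s : ℤ) (x y : Vc × Vc) : ℂ := hev c e s (Phi t1 t2 t3 x y)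

lemma dot_ef (ℓ : Vc) (j : Fin 4) : ℓ ⬝ᵥ ef j = ℓ j := by
  fin_cases j <;> simp [dotProduct, ef, Fin.sum_univ_four]

lemma vc_decomp (x : Vc) : x = x 0 • ef 0 + x 1 • ef 1 + x 2 • ef 2 + x 3 • ef 3 := by
  funext j; fin_cases j <;> simp [ef]

lemma anti_apply (F : Vc →ₗ[ℂ] Vc) (hF : IsAnti ⇑F) (x : Vc) :
    F x = ![F (ef 1) 0 * x 1 + F (ef 2) 0 * x 2 + F (ef 3) 0 * x 3,
            -(F (ef 1) 0 * x 0) + F (ef 2) 1 * x 2 + F (ef 3) 1 * x 3,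
            -(F (ef 2) 0 * x 0) - F (ef 2) 1 * x 1 + F (ef 3) 2 * x 3,
            -(F (ef 3) 0 * x 0) - F (ef 3) 1 * x 1 - F (ef 3) 2 * x 2] := by
  have key : ∀ i j : Fin 4, F (ef i) j = -(F (ef j) i) := fun i j => by
    have := hF (ef i) (ef j); rwa [dot_ef, dot_ef] at this
  have diag : ∀ i, F (ef i) i = 0 := fun i => by
    have h := key i i
    have h2 : (2:ℂ) * F (ef i) i = 0 := by linear_combination h
    exact (mul_eq_zero.mp h2).resolve_left two_ne_zero
  have hFx : ∀ i, F x i =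
      x 0 * F (ef 0) i + x 1 * F (ef 1) i + x 2 * F (ef 2) i + x 3 * F (ef 3) i := by
    intro i
    conv_lhs => rw [vc_decomp x]
    simp [Pi.smul_apply, smul_eq_mul]
  funext i; fin_cases i
  · show F x 0 = _; rw [hFx 0, diag 0]; simp; ring
  · show F x 1 = _; rw [hFx 1, key 0 1, diag 1]; simp; ring
  · show F x 2 = _; rw [hFx 2, key 0 2, key 1 2, diag 2]; simp; ring
  · show F x 3 = _; rw [hFx 3, key 0 3, key 1 3, key 2 3, diag 3]; simp; ring

def amap (P Q R U V W : ℂ) : Vc →ₗ[ℂ] Vc :=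
  Matrix.mulVecLin !![0,P,Q,R; -P,0,U,V; -Q,-U,0,W; -R,-V,-W,0]

lemma amap_apply (P Q R U V W : ℂ) (x : Vc) :
    amap P Q R U V W x = ![P * x 1 + Q * x 2 + R * x 3, -(P * x 0) + U * x 2 + V * x 3,
      -(Q * x 0) - U * x 1 + W * x 3, -(R * x 0) - V * x 1 - W * x 2] := by
  funext j; fin_cases j <;>
    simp [amap, Matrix.mulVecLin_apply, Matrix.mulVec, dotProduct, Fin.sum_univ_four] <;> ring

lemma mem_ker_amap (P Q R U V W : ℂ) (x : Vc) :
    x ∈ LinearMap.ker (amap P Q R U V W) ↔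
      (P * x 1 + Q * x 2 + R * x 3 = 0 ∧ -(P * x 0) + U * x 2 + V * x 3 = 0 ∧
       -(Q * x 0) - U * x 1 + W * x 3 = 0 ∧ -(R * x 0) - V * x 1 - W * x 2 = 0) := by
  rw [LinearMap.mem_ker, amap_apply]
  constructor
  · intro h
    refine ⟨?_, ?_, ?_, ?_⟩
    · exact congrFun h 0
    · exact congrFun h 1
    · exact congrFun h 2
    · exact congrFun h 3
  · rintro ⟨h0, h1, h2, h3⟩
    funext j; fin_cases j
    · exact h0
    · exact h1
    · exact h2
    · exact h3

lemma ker_amap_case (P Q R U V W : ℂ) (hpf : P*W - Q*V + R*U = 0) (hP : P ≠ 0) :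
    ∃ z1 z2 : Vc, LinearIndependent ℂ ![z1, z2] ∧
      LinearMap.ker (amap P Q R U V W) = Submodule.span ℂ {z1, z2} := by
  refine ⟨![-V, R, 0, -P], ![U, -Q, P, 0], ?_, ?_⟩
  · rw [LinearIndependent.pair_iff]
    intro sc tc hst
    have e2 := congrFun hst 2
    have e3 := congrFun hst 3
    simp only [Pi.add_apply, Pi.smul_apply, smul_eq_mul, Pi.zero_apply,
      Matrix.cons_val_zero, Matrix.cons_val_one, Matrix.head_cons,
      Matrix.cons_val_two, Matrix.tail_cons, Matrix.cons_val_three] at e2 e3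
    constructor
    · have : sc * -P = 0 := by linear_combination e3
      rcases mul_eq_zero.mp this with h | h
      · exact h
      · exact absurd (neg_eq_zero.mp h) hP
    · have : tc * P = 0 := by linear_combination e2
      rcases mul_eq_zero.mp this with h | h
      · exact h
      · exact absurd h hP
  · have hz1 : (![-V, R, 0, -P] : Vc) ∈ LinearMap.ker (amap P Q R U V W) := by
      rw [mem_ker_amap]
      refine ⟨by simp; ring, by simp; ring, by simp; linear_combination -hpf, by simp; ring⟩
    have hz2 : (![U, -Q, P, 0] : Vc) ∈ LinearMap.ker (amap P Q R U V W) := by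
      rw [mem_ker_amap]
      refine ⟨by simp; ring, by simp; ring, by simp; ring, by simp; linear_combination -hpf⟩
    refine le_antisymm ?_ ?_
    · intro x hx
      rw [mem_ker_amap] at hx
      obtain ⟨h0, h1, h2, h3⟩ := hx
      rw [Submodule.mem_span_pair]
      refine ⟨-(x 3)/P, x 2/P, ?_⟩
      funext j; fin_cases j
      · show -(x 3)/P * _ + x 2/P * _ = x 0
        simp only [Matrix.cons_val_zero, Fin.zero_eta]
        field_simp
        linear_combination h1
      · show -(x 3)/P * _ + x 2/P * _ = x 1
        simp only [Matrix.cons_val_one, Matrix.head_cons, Fin.mk_one, Fin.isValue, Matrix.cons_val_zero]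
        field_simp
        linear_combination -h0
      · show -(x 3)/P * _ + x 2/P * _ = x 2
        simp
        field_simp
      · show -(x 3)/P * _ + x 2/P * _ = x 3
        simp
        field_simp
    · rw [Submodule.span_le]
      rintro y (rfl | rfl)
      · exact hz1
      · exact hz2

lemma ker_amap_caseQ (P Q R U V W : ℂ) (hpf : P*W - Q*V + R*U = 0) (hQ : Q ≠ 0) :
    ∃ z1 z2 : Vc, LinearIndependent ℂ ![z1, z2] ∧
      LinearMap.ker (amap P Q R U V W) = Submodule.span ℂ {z1, z2} := by
  refine ⟨![W, 0, -R, Q], ![U, -Q, P, 0], ?_, ?_⟩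
  · rw [LinearIndependent.pair_iff]
    intro sc tc hst
    have es := congrFun hst 3
    have et := congrFun hst 1
    simp only [Pi.add_apply, Pi.smul_apply, smul_eq_mul, Pi.zero_apply,
      Matrix.cons_val_zero, Matrix.cons_val_one, Matrix.head_cons,
      Matrix.cons_val_two, Matrix.tail_cons, Matrix.cons_val_three] at es et
    constructor
    · have : sc * Q = 0 := by linear_combination es
      rcases mul_eq_zero.mp this with h | h
      · exact h
      · exact absurd h hQ
    · have : tc * -Q = 0 := by linear_combination et
      rcases mul_eq_zero.mp this with h | h
      · exact h
      · exact absurd (neg_eq_zero.mp h) hQ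
  · have hz1 : (![W, 0, -R, Q] : Vc) ∈ LinearMap.ker (amap P Q R U V W) := by
      rw [mem_ker_amap]
      refine ⟨by simp; ring, by simp; linear_combination -hpf, by simp; ring, by simp; ring⟩
    have hz2 : (![U, -Q, P, 0] : Vc) ∈ LinearMap.ker (amap P Q R U V W) := by
      rw [mem_ker_amap]
      refine ⟨by simp; ring, by simp; ring, by simp; ring, by simp; linear_combination -hpf⟩
    refine le_antisymm ?_ ?_
    · intro x hx
      rw [mem_ker_amap] at hx
      obtain ⟨h0, h1, h2, h3⟩ := hx
      rw [Submodule.mem_span_pair]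
      refine ⟨x 3/Q, -(x 1)/Q, ?_⟩
      funext j; fin_cases j
      · show _ + _ = x 0
        simp only [Matrix.cons_val_zero, Matrix.cons_val_one, Matrix.head_cons,
          Matrix.cons_val_two, Matrix.tail_cons, Matrix.cons_val_three, Pi.smul_apply, smul_eq_mul,
          Fin.zero_eta, Fin.mk_one, Fin.reduceFinMk, Fin.isValue, Matrix.vecHead]
        field_simp
        try linear_combination h2
        try ring
      · show _ + _ = x 1
        simp only [Matrix.cons_val_zero, Matrix.cons_val_one, Matrix.head_cons,
          Matrix.cons_val_two, Matrix.tail_cons, Matrix.cons_val_three, Pi.smul_apply, smul_eq_mul,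
          Fin.zero_eta, Fin.mk_one, Fin.reduceFinMk, Fin.isValue, Matrix.vecHead]
        field_simp
        try ring
      · show _ + _ = x 2
        simp only [Matrix.cons_val_zero, Matrix.cons_val_one, Matrix.head_cons,
          Matrix.cons_val_two, Matrix.tail_cons, Matrix.cons_val_three, Pi.smul_apply, smul_eq_mul,
          Fin.zero_eta, Fin.mk_one, Fin.reduceFinMk, Fin.isValue, Matrix.vecHead]
        field_simp
        try linear_combination -h0
        try ring
      · show _ + _ = x 3
        simp only [Matrix.cons_val_zero, Matrix.cons_val_one, Matrix.head_cons,
          Matrix.cons_val_two, Matrix.tail_cons, Matrix.cons_val_three, Pi.smul_apply, smul_eq_mul,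
          Fin.zero_eta, Fin.mk_one, Fin.reduceFinMk, Fin.isValue, Matrix.vecHead]
        field_simp
        try ring
    · rw [Submodule.span_le]
      rintro y (rfl | rfl)
      · exact hz1
      · exact hz2

lemma ker_amap_caseR (P Q R U V W : ℂ) (hpf : P*W - Q*V + R*U = 0) (hR : R ≠ 0) :
    ∃ z1 z2 : Vc, LinearIndependent ℂ ![z1, z2] ∧
      LinearMap.ker (amap P Q R U V W) = Submodule.span ℂ {z1, z2} := by
  refine ⟨![W, 0, -R, Q], ![-V, R, 0, -P], ?_, ?_⟩
  · rw [LinearIndependent.pair_iff]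
    intro sc tc hst
    have es := congrFun hst 2
    have et := congrFun hst 1
    simp only [Pi.add_apply, Pi.smul_apply, smul_eq_mul, Pi.zero_apply,
      Matrix.cons_val_zero, Matrix.cons_val_one, Matrix.head_cons,
      Matrix.cons_val_two, Matrix.tail_cons, Matrix.cons_val_three] at es et
    constructor
    · have : sc * -R = 0 := by linear_combination es
      rcases mul_eq_zero.mp this with h | h
      · exact h
      · exact absurd (neg_eq_zero.mp h) hR
    · have : tc * R = 0 := by linear_combination et
      rcases mul_eq_zero.mp this with h | h
      · exact h
      · exact absurd h hR
  · have hz1 : (![W, 0, -R, Q] : Vc) ∈ LinearMap.ker (amap P Q R U V W) := by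
      rw [mem_ker_amap]
      refine ⟨by simp; ring, by simp; linear_combination -hpf, by simp; ring, by simp; ring⟩
    have hz2 : (![-V, R, 0, -P] : Vc) ∈ LinearMap.ker (amap P Q R U V W) := by
      rw [mem_ker_amap]
      refine ⟨by simp; ring, by simp; ring, by simp; linear_combination -hpf, by simp; ring⟩
    refine le_antisymm ?_ ?_
    · intro x hx
      rw [mem_ker_amap] at hx
      obtain ⟨h0, h1, h2, h3⟩ := hx
      rw [Submodule.mem_span_pair]
      refine ⟨-(x 2)/R, x 1/R, ?_⟩
      funext j; fin_cases j
      · show _ + _ = x 0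
        simp only [Matrix.cons_val_zero, Matrix.cons_val_one, Matrix.head_cons,
          Matrix.cons_val_two, Matrix.tail_cons, Matrix.cons_val_three, Pi.smul_apply, smul_eq_mul,
          Fin.zero_eta, Fin.mk_one, Fin.reduceFinMk, Fin.isValue, Matrix.vecHead]
        field_simp
        try linear_combination h3
        try ring
      · show _ + _ = x 1
        simp only [Matrix.cons_val_zero, Matrix.cons_val_one, Matrix.head_cons,
          Matrix.cons_val_two, Matrix.tail_cons, Matrix.cons_val_three, Pi.smul_apply, smul_eq_mul,
          Fin.zero_eta, Fin.mk_one, Fin.reduceFinMk, Fin.isValue, Matrix.vecHead]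
        field_simp
        try ring
      · show _ + _ = x 2
        simp only [Matrix.cons_val_zero, Matrix.cons_val_one, Matrix.head_cons,
          Matrix.cons_val_two, Matrix.tail_cons, Matrix.cons_val_three, Pi.smul_apply, smul_eq_mul,
          Fin.zero_eta, Fin.mk_one, Fin.reduceFinMk, Fin.isValue, Matrix.vecHead]
        field_simp
        try ring
      · show _ + _ = x 3
        simp only [Matrix.cons_val_zero, Matrix.cons_val_one, Matrix.head_cons,
          Matrix.cons_val_two, Matrix.tail_cons, Matrix.cons_val_three, Pi.smul_apply, smul_eq_mul,
          Fin.zero_eta, Fin.mk_one, Fin.reduceFinMk, Fin.isValue, Matrix.vecHead]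
        field_simp
        try linear_combination -h0
        try ring
    · rw [Submodule.span_le]
      rintro y (rfl | rfl)
      · exact hz1
      · exact hz2

lemma ker_amap_caseU (P Q R U V W : ℂ) (hpf : P*W - Q*V + R*U = 0) (hU : U ≠ 0) :
    ∃ z1 z2 : Vc, LinearIndependent ℂ ![z1, z2] ∧
      LinearMap.ker (amap P Q R U V W) = Submodule.span ℂ {z1, z2} := by
  refine ⟨![0, -W, V, -U], ![U, -Q, P, 0], ?_, ?_⟩
  · rw [LinearIndependent.pair_iff]
    intro sc tc hst
    have es := congrFun hst 3
    have et := congrFun hst 0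
    simp only [Pi.add_apply, Pi.smul_apply, smul_eq_mul, Pi.zero_apply,
      Matrix.cons_val_zero, Matrix.cons_val_one, Matrix.head_cons,
      Matrix.cons_val_two, Matrix.tail_cons, Matrix.cons_val_three] at es et
    constructor
    · have : sc * -U = 0 := by linear_combination es
      rcases mul_eq_zero.mp this with h | h
      · exact h
      · exact absurd (neg_eq_zero.mp h) hU
    · have : tc * U = 0 := by linear_combination et
      rcases mul_eq_zero.mp this with h | h
      · exact h
      · exact absurd h hU
  · have hz1 : (![0, -W, V, -U] : Vc) ∈ LinearMap.ker (amap P Q R U V W) := by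
      rw [mem_ker_amap]
      refine ⟨by simp; linear_combination -hpf, by simp; ring, by simp; ring, by simp; ring⟩
    have hz2 : (![U, -Q, P, 0] : Vc) ∈ LinearMap.ker (amap P Q R U V W) := by
      rw [mem_ker_amap]
      refine ⟨by simp; ring, by simp; ring, by simp; ring, by simp; linear_combination -hpf⟩
    refine le_antisymm ?_ ?_
    · intro x hx
      rw [mem_ker_amap] at hx
      obtain ⟨h0, h1, h2, h3⟩ := hx
      rw [Submodule.mem_span_pair]
      refine ⟨-(x 3)/U, x 0/U, ?_⟩
      funext j; fin_cases j
      · show _ + _ = x 0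
        simp only [Matrix.cons_val_zero, Matrix.cons_val_one, Matrix.head_cons,
          Matrix.cons_val_two, Matrix.tail_cons, Matrix.cons_val_three, Pi.smul_apply, smul_eq_mul,
          Fin.zero_eta, Fin.mk_one, Fin.reduceFinMk, Fin.isValue, Matrix.vecHead]
        field_simp
        try ring
      · show _ + _ = x 1
        simp only [Matrix.cons_val_zero, Matrix.cons_val_one, Matrix.head_cons,
          Matrix.cons_val_two, Matrix.tail_cons, Matrix.cons_val_three, Pi.smul_apply, smul_eq_mul,
          Fin.zero_eta, Fin.mk_one, Fin.reduceFinMk, Fin.isValue, Matrix.vecHead]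
        field_simp
        try linear_combination h2
        try ring
      · show _ + _ = x 2
        simp only [Matrix.cons_val_zero, Matrix.cons_val_one, Matrix.head_cons,
          Matrix.cons_val_two, Matrix.tail_cons, Matrix.cons_val_three, Pi.smul_apply, smul_eq_mul,
          Fin.zero_eta, Fin.mk_one, Fin.reduceFinMk, Fin.isValue, Matrix.vecHead]
        field_simp
        try linear_combination -h1
        try ring
      · show _ + _ = x 3
        simp only [Matrix.cons_val_zero, Matrix.cons_val_one, Matrix.head_cons,
          Matrix.cons_val_two, Matrix.tail_cons, Matrix.cons_val_three, Pi.smul_apply, smul_eq_mul,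
          Fin.zero_eta, Fin.mk_one, Fin.reduceFinMk, Fin.isValue, Matrix.vecHead]
        field_simp
        try ring
    · rw [Submodule.span_le]
      rintro y (rfl | rfl)
      · exact hz1
      · exact hz2

lemma ker_amap_caseV (P Q R U V W : ℂ) (hpf : P*W - Q*V + R*U = 0) (hV : V ≠ 0) :
    ∃ z1 z2 : Vc, LinearIndependent ℂ ![z1, z2] ∧
      LinearMap.ker (amap P Q R U V W) = Submodule.span ℂ {z1, z2} := by
  refine ⟨![0, -W, V, -U], ![-V, R, 0, -P], ?_, ?_⟩
  · rw [LinearIndependent.pair_iff]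
    intro sc tc hst
    have es := congrFun hst 2
    have et := congrFun hst 0
    simp only [Pi.add_apply, Pi.smul_apply, smul_eq_mul, Pi.zero_apply,
      Matrix.cons_val_zero, Matrix.cons_val_one, Matrix.head_cons,
      Matrix.cons_val_two, Matrix.tail_cons, Matrix.cons_val_three] at es et
    constructor
    · have : sc * V = 0 := by linear_combination es
      rcases mul_eq_zero.mp this with h | h
      · exact h
      · exact absurd h hV
    · have : tc * -V = 0 := by linear_combination et
      rcases mul_eq_zero.mp this with h | h
      · exact h
      · exact absurd (neg_eq_zero.mp h) hV
  · have hz1 : (![0, -W, V, -U] : Vc) ∈ LinearMap.ker (amap P Q R U V W) := by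
      rw [mem_ker_amap]
      refine ⟨by simp; linear_combination -hpf, by simp; ring, by simp; ring, by simp; ring⟩
    have hz2 : (![-V, R, 0, -P] : Vc) ∈ LinearMap.ker (amap P Q R U V W) := by
      rw [mem_ker_amap]
      refine ⟨by simp; ring, by simp; ring, by simp; linear_combination -hpf, by simp; ring⟩
    refine le_antisymm ?_ ?_
    · intro x hx
      rw [mem_ker_amap] at hx
      obtain ⟨h0, h1, h2, h3⟩ := hx
      rw [Submodule.mem_span_pair]
      refine ⟨x 2/V, -(x 0)/V, ?_⟩
      funext j; fin_cases j
      · show _ + _ = x 0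
        simp only [Matrix.cons_val_zero, Matrix.cons_val_one, Matrix.head_cons,
          Matrix.cons_val_two, Matrix.tail_cons, Matrix.cons_val_three, Pi.smul_apply, smul_eq_mul,
          Fin.zero_eta, Fin.mk_one, Fin.reduceFinMk, Fin.isValue, Matrix.vecHead]
        field_simp
        try ring
      · show _ + _ = x 1
        simp only [Matrix.cons_val_zero, Matrix.cons_val_one, Matrix.head_cons,
          Matrix.cons_val_two, Matrix.tail_cons, Matrix.cons_val_three, Pi.smul_apply, smul_eq_mul,
          Fin.zero_eta, Fin.mk_one, Fin.reduceFinMk, Fin.isValue, Matrix.vecHead]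
        field_simp
        try linear_combination h3
        try ring
      · show _ + _ = x 2
        simp only [Matrix.cons_val_zero, Matrix.cons_val_one, Matrix.head_cons,
          Matrix.cons_val_two, Matrix.tail_cons, Matrix.cons_val_three, Pi.smul_apply, smul_eq_mul,
          Fin.zero_eta, Fin.mk_one, Fin.reduceFinMk, Fin.isValue, Matrix.vecHead]
        field_simp
        try ring
      · show _ + _ = x 3
        simp only [Matrix.cons_val_zero, Matrix.cons_val_one, Matrix.head_cons,
          Matrix.cons_val_two, Matrix.tail_cons, Matrix.cons_val_three, Pi.smul_apply, smul_eq_mul,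
          Fin.zero_eta, Fin.mk_one, Fin.reduceFinMk, Fin.isValue, Matrix.vecHead]
        field_simp
        try linear_combination -h1
        try ring
    · rw [Submodule.span_le]
      rintro y (rfl | rfl)
      · exact hz1
      · exact hz2

lemma ker_amap_caseW (P Q R U V W : ℂ) (hpf : P*W - Q*V + R*U = 0) (hW : W ≠ 0) :
    ∃ z1 z2 : Vc, LinearIndependent ℂ ![z1, z2] ∧
      LinearMap.ker (amap P Q R U V W) = Submodule.span ℂ {z1, z2} := by
  refine ⟨![0, -W, V, -U], ![W, 0, -R, Q], ?_, ?_⟩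
  · rw [LinearIndependent.pair_iff]
    intro sc tc hst
    have es := congrFun hst 1
    have et := congrFun hst 0
    simp only [Pi.add_apply, Pi.smul_apply, smul_eq_mul, Pi.zero_apply,
      Matrix.cons_val_zero, Matrix.cons_val_one, Matrix.head_cons,
      Matrix.cons_val_two, Matrix.tail_cons, Matrix.cons_val_three] at es et
    constructor
    · have : sc * -W = 0 := by linear_combination es
      rcases mul_eq_zero.mp this with h | h
      · exact h
      · exact absurd (neg_eq_zero.mp h) hW
    · have : tc * W = 0 := by linear_combination et
      rcases mul_eq_zero.mp this with h | h
      · exact h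
      · exact absurd h hW
  · have hz1 : (![0, -W, V, -U] : Vc) ∈ LinearMap.ker (amap P Q R U V W) := by
      rw [mem_ker_amap]
      refine ⟨by simp; linear_combination -hpf, by simp; ring, by simp; ring, by simp; ring⟩
    have hz2 : (![W, 0, -R, Q] : Vc) ∈ LinearMap.ker (amap P Q R U V W) := by
      rw [mem_ker_amap]
      refine ⟨by simp; ring, by simp; linear_combination -hpf, by simp; ring, by simp; ring⟩
    refine le_antisymm ?_ ?_
    · intro x hx
      rw [mem_ker_amap] at hx
      obtain ⟨h0, h1, h2, h3⟩ := hx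
      rw [Submodule.mem_span_pair]
      refine ⟨-(x 1)/W, x 0/W, ?_⟩
      funext j; fin_cases j
      · show _ + _ = x 0
        simp only [Matrix.cons_val_zero, Matrix.cons_val_one, Matrix.head_cons,
          Matrix.cons_val_two, Matrix.tail_cons, Matrix.cons_val_three, Pi.smul_apply, smul_eq_mul,
          Fin.zero_eta, Fin.mk_one, Fin.reduceFinMk, Fin.isValue, Matrix.vecHead]
        field_simp
        try ring
      · show _ + _ = x 1
        simp only [Matrix.cons_val_zero, Matrix.cons_val_one, Matrix.head_cons,
          Matrix.cons_val_two, Matrix.tail_cons, Matrix.cons_val_three, Pi.smul_apply, smul_eq_mul,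
          Fin.zero_eta, Fin.mk_one, Fin.reduceFinMk, Fin.isValue, Matrix.vecHead]
        field_simp
        try ring
      · show _ + _ = x 2
        simp only [Matrix.cons_val_zero, Matrix.cons_val_one, Matrix.head_cons,
          Matrix.cons_val_two, Matrix.tail_cons, Matrix.cons_val_three, Pi.smul_apply, smul_eq_mul,
          Fin.zero_eta, Fin.mk_one, Fin.reduceFinMk, Fin.isValue, Matrix.vecHead]
        field_simp
        try linear_combination h3
        try ring
      · show _ + _ = x 3
        simp only [Matrix.cons_val_zero, Matrix.cons_val_one, Matrix.head_cons,
          Matrix.cons_val_two, Matrix.tail_cons, Matrix.cons_val_three, Pi.smul_apply, smul_eq_mul,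
          Fin.zero_eta, Fin.mk_one, Fin.reduceFinMk, Fin.isValue, Matrix.vecHead]
        field_simp
        try linear_combination -h2
        try ring
    · rw [Submodule.span_le]
      rintro y (rfl | rfl)
      · exact hz1
      · exact hz2

lemma ker_amap (P Q R U V W : ℂ) (hpf : P*W - Q*V + R*U = 0)
    (hne : ¬(P = 0 ∧ Q = 0 ∧ R = 0 ∧ U = 0 ∧ V = 0 ∧ W = 0)) :
    ∃ z1 z2 : Vc, LinearIndependent ℂ ![z1, z2] ∧
      LinearMap.ker (amap P Q R U V W) = Submodule.span ℂ {z1, z2} := by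
  by_cases hP : P = 0
  · by_cases hQ : Q = 0
    · by_cases hR : R = 0
      · by_cases hU : U = 0
        · by_cases hV : V = 0
          · by_cases hW : W = 0
            · exact absurd ⟨hP, hQ, hR, hU, hV, hW⟩ hne
            · exact ker_amap_caseW P Q R U V W hpf hW
          · exact ker_amap_caseV P Q R U V W hpf hV
        · exact ker_amap_caseU P Q R U V W hpf hU
      · exact ker_amap_caseR P Q R U V W hpf hR
    · exact ker_amap_caseQ P Q R U V W hpf hQ
  · exact ker_amap_case P Q R U V W hpf hP


lemma omegaF_eq (f : Vc →ₗ[ℂ] Vc) (hfa : IsAnti ⇑f) :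
    omegaF ⇑f = ![f (ef 1) 0, f (ef 2) 0, f (ef 3) 0, f (ef 2) 1, f (ef 3) 1, f (ef 3) 2] := by
  have key : ∀ i j : Fin 4, f (ef i) j = -(f (ef j) i) := fun i j => by
    have := hfa (ef i) (ef j); rwa [dot_ef, dot_ef] at this
  funext k; fin_cases k
  · show (f (ef 1) ⬝ᵥ ef 0 - f (ef 0) ⬝ᵥ ef 1) / 2 = f (ef 1) 0
    rw [dot_ef, dot_ef, key 0 1]; ring
  · show (f (ef 2) ⬝ᵥ ef 0 - f (ef 0) ⬝ᵥ ef 2) / 2 = f (ef 2) 0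
    rw [dot_ef, dot_ef, key 0 2]; ring
  · show (f (ef 3) ⬝ᵥ ef 0 - f (ef 0) ⬝ᵥ ef 3) / 2 = f (ef 3) 0
    rw [dot_ef, dot_ef, key 0 3]; ring
  · show (f (ef 2) ⬝ᵥ ef 1 - f (ef 1) ⬝ᵥ ef 2) / 2 = f (ef 2) 1
    rw [dot_ef, dot_ef, key 1 2]; ring
  · show (f (ef 3) ⬝ᵥ ef 1 - f (ef 1) ⬝ᵥ ef 3) / 2 = f (ef 3) 1
    rw [dot_ef, dot_ef, key 1 3]; ring
  · show (f (ef 3) ⬝ᵥ ef 2 - f (ef 2) ⬝ᵥ ef 3) / 2 = f (ef 3) 2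
    rw [dot_ef, dot_ef, key 2 3]; ring

set_option maxHeartbeats 2000000 in
/-- **(From the proof of Theorem 5.2 in O'Grady.)** Assume `θ₁, θ₂, θ₃` all nonzero,
`m > 0`, `θ₁·θ₂ = 2m·θ₃²`, `c, e > 0`, `(h,h)^∨ = 2c²e − s²/m > 0`, and let `g` be the
antisymmetric isomorphism `V_ℂ → V_ℂ^∨` with `ω_g = h₀`.  Then:
(i) `Ψ` maps `V_ℚ ⊕ V_ℚ^∨` onto itself;
(ii) `Ψ∘Ψ = −(N−b²)·Id` where `N − b² = (θ₃²/(c⁴e²θ₂²))·(2mc²e − s²) > 0`;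
(iii) for every `[σ] ∈ D_h`, `Ψ` preserves `H^{1,0}_{[σ]}(θ)` and its restriction there
has eigenvalues `±i√(N−b²)`, each with 2-dimensional eigenspace. -/
theorem statement15 (t1 t2 t3 : ℤ) (h1 : t1 ≠ 0) (h2 : t2 ≠ 0) (h3 : t3 ≠ 0)
    (m : ℚ) (hm : 0 < m) (hrel : (t1 : ℚ) * t2 = 2 * m * t3 ^ 2)
    (c e s : ℤ) (hc : 0 < c) (he : 0 < e)
    (hhh : 0 < 2 * (c : ℚ) ^ 2 * (e : ℚ) - (s : ℚ) ^ 2 / m)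
    (g : Vc ≃ₗ[ℂ] Vc) (hg : IsAnti ⇑g) (hgw : omegaF ⇑g = h0v c e) :
    Set.image (⇑(PsiL g (Nq t1 t2 c e) (bq t2 t3 c e s))) ratSet = ratSet ∧
    (∀ p : Vc × Vc,
      PsiL g (Nq t1 t2 c e) (bq t2 t3 c e s) (PsiL g (Nq t1 t2 c e) (bq t2 t3 c e s) p) =
        -(((Nq t1 t2 c e - bq t2 t3 c e s ^ 2 : ℚ) : ℂ)) • p) ∧
    (Nq t1 t2 c e - bq t2 t3 c e s ^ 2 =
        (t3 : ℚ) ^ 2 / ((c : ℚ) ^ 4 * (e : ℚ) ^ 2 * (t2 : ℚ) ^ 2) *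
          (2 * m * (c : ℚ) ^ 2 * (e : ℚ) - (s : ℚ) ^ 2) ∧
      (t3 : ℚ) ^ 2 / ((c : ℚ) ^ 4 * (e : ℚ) ^ 2 * (t2 : ℚ) ^ 2) *
          (2 * m * (c : ℚ) ^ 2 * (e : ℚ) - (s : ℚ) ^ 2) =
        (t3 : ℚ) ^ 2 / ((c : ℚ) ^ 4 * (e : ℚ) ^ 2 * (t2 : ℚ) ^ 2) * m *
          (2 * (c : ℚ) ^ 2 * (e : ℚ) - (s : ℚ) ^ 2 / m) ∧
      0 < Nq t1 t2 c e - bq t2 t3 c e s ^ 2) ∧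
    (∀ σ : W2 × ℂ, memD m σ → hev c e s σ = 0 →
      ∀ H : Submodule ℂ (Vc × Vc), IsH10 t1 t2 t3 σ H →
        (∀ x ∈ H, PsiL g (Nq t1 t2 c e) (bq t2 t3 c e s) x ∈ H) ∧
        Module.finrank ℂ
          ↥(Module.End.eigenspace (PsiL g (Nq t1 t2 c e) (bq t2 t3 c e s))
              (sqNb (Nq t1 t2 c e) (bq t2 t3 c e s)) ⊓ H) = 2 ∧
        Module.finrank ℂ
          ↥(Module.End.eigenspace (PsiL g (Nq t1 t2 c e) (bq t2 t3 c e s))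
              (-sqNb (Nq t1 t2 c e) (bq t2 t3 c e s)) ⊓ H) = 2) := by
  classical
  set N : ℚ := Nq t1 t2 c e with hN
  set b : ℚ := bq t2 t3 c e s with hb
  set lam : ℂ := sqNb N b with hlamdef
  have hCq : (c:ℚ) ≠ 0 := Int.cast_ne_zero.mpr hc.ne'
  have hEq' : (e:ℚ) ≠ 0 := Int.cast_ne_zero.mpr he.ne'
  have ht2q : (t2:ℚ) ≠ 0 := Int.cast_ne_zero.mpr h2
  have ht3q : (t3:ℚ) ≠ 0 := Int.cast_ne_zero.mpr h3
  have hC : ((c:ℤ):ℂ) ≠ 0 := Int.cast_ne_zero.mpr hc.ne'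
  have hE : ((e:ℤ):ℂ) ≠ 0 := Int.cast_ne_zero.mpr he.ne'
  have hT2 : ((t2:ℤ):ℂ) ≠ 0 := Int.cast_ne_zero.mpr h2
  have hT3 : ((t3:ℤ):ℂ) ≠ 0 := Int.cast_ne_zero.mpr h3
  have hmne : m ≠ 0 := hm.ne'
  -- numeric identities
  have key1 : N - b^2 = (t3:ℚ)^2/((c:ℚ)^4*(e:ℚ)^2*(t2:ℚ)^2) *
      (2*m*(c:ℚ)^2*(e:ℚ) - (s:ℚ)^2) := by
    rw [hN, hb, Nq, bq]
    field_simp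
    ring_nf
    linear_combination ((c:ℚ)^2*(e:ℚ)) * hrel
  have key2 : (t3:ℚ)^2/((c:ℚ)^4*(e:ℚ)^2*(t2:ℚ)^2) * (2*m*(c:ℚ)^2*(e:ℚ) - (s:ℚ)^2) =
      (t3:ℚ)^2/((c:ℚ)^4*(e:ℚ)^2*(t2:ℚ)^2) * m * (2*(c:ℚ)^2*(e:ℚ) - (s:ℚ)^2/m) := by
    field_simp
  have ht3sq : 0 < (t3:ℚ)^2 :=
    (sq_nonneg _).lt_of_ne (fun hcon => ht3q ((pow_eq_zero_iff two_ne_zero).mp hcon.symm))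
  have hden : 0 < (c:ℚ)^4*(e:ℚ)^2*(t2:ℚ)^2 := by
    have h4 : 0 < (c:ℚ)^4 := pow_pos (by exact_mod_cast hc) 4
    have h5 : 0 < (e:ℚ)^2 := pow_pos (by exact_mod_cast he) 2
    have h6 : 0 < (t2:ℚ)^2 :=
      (sq_nonneg _).lt_of_ne (fun hcon => ht2q ((pow_eq_zero_iff two_ne_zero).mp hcon.symm))
    positivity
  have hkpos : 0 < N - b^2 := by
    rw [key1, key2]
    exact mul_pos (mul_pos (div_pos ht3sq hden) hm) hhh
  have hkR : (0:ℝ) < ((N - b^2 : ℚ) : ℝ) := by exact_mod_cast hkpos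
  have hlamsq : lam^2 = -(((N - b^2 : ℚ)):ℂ) := by
    rw [hlamdef, sqNb]
    have hs : (Real.sqrt ((N - b^2 : ℚ):ℝ))^2 = ((N - b^2:ℚ):ℝ) := Real.sq_sqrt hkR.le
    have : (Complex.I * ((Real.sqrt ((N - b^2:ℚ):ℝ) : ℝ):ℂ))^2
        = (Complex.I)^2 * (((Real.sqrt ((N - b^2:ℚ):ℝ))^2 : ℝ) : ℂ) := by
      push_cast
      ring
    rw [this, hs, Complex.I_sq]
    push_cast
    ring
  have hlamne : lam ≠ 0 := by
    rw [hlamdef, sqNb]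
    exact mul_ne_zero Complex.I_ne_zero
      (Complex.ofReal_ne_zero.mpr (Real.sqrt_pos.mpr hkR).ne')
  have hkC : ((N:ℚ):ℂ) - ((b:ℚ):ℂ)^2 = ((N - b^2 : ℚ) : ℂ) := by push_cast; ring
  have hPsiApp : ∀ p : Vc × Vc, PsiL g N b p =
      (g.symm p.2 - ((b:ℚ):ℂ) • p.1, ((b:ℚ):ℂ) • p.2 - ((N:ℚ):ℂ) • g p.1) := fun p => rfl
  -- Psi squared
  have hPsi2 : ∀ p : Vc × Vc, PsiL g N b (PsiL g N b p) = -(((N - b^2:ℚ)):ℂ) • p := by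
    intro p
    rw [hPsiApp, hPsiApp, ← hkC]
    apply Prod.ext
    · show g.symm (((b:ℚ):ℂ) • p.2 - ((N:ℚ):ℂ) • g p.1) -
        ((b:ℚ):ℂ) • (g.symm p.2 - ((b:ℚ):ℂ) • p.1) = _
      rw [map_sub, _root_.map_smul, _root_.map_smul, g.symm_apply_apply]
      show _ = (-(((N:ℚ):ℂ) - ((b:ℚ):ℂ)^2)) • p.1
      module
    · show ((b:ℚ):ℂ) • (((b:ℚ):ℂ) • p.2 - ((N:ℚ):ℂ) • g p.1) -
        ((N:ℚ):ℂ) • g (g.symm p.2 - ((b:ℚ):ℂ) • p.1) = _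
      rw [map_sub, _root_.map_smul, g.apply_symm_apply]
      show _ = (-(((N:ℚ):ℂ) - ((b:ℚ):ℂ)^2)) • p.2
      module
  -- explicit form of g
  have gkey : ∀ i j : Fin 4, (⇑g (ef i)) j = -((⇑g (ef j)) i) := fun i j => by
    have := hg (ef i) (ef j); rwa [dot_ef, dot_ef] at this
  have hogf : omegaF ⇑g = ![g (ef 1) 0, g (ef 2) 0, g (ef 3) 0, g (ef 2) 1, g (ef 3) 1,
      g (ef 3) 2] := omegaF_eq g.toLinearMap (by simpa using hg)
  have hgE : g (ef 1) 0 = (c:ℂ)*(e:ℂ) ∧ g (ef 2) 0 = 0 ∧ g (ef 3) 0 = 0 ∧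
      g (ef 2) 1 = 0 ∧ g (ef 3) 1 = 0 ∧ g (ef 3) 2 = (c:ℂ) := by
    rw [hgw] at hogf
    refine ⟨?_, ?_, ?_, ?_, ?_, ?_⟩
    · have := congrFun hogf.symm 0; simpa [h0v] using this
    · have := congrFun hogf.symm 1; simpa [h0v] using this
    · have := congrFun hogf.symm 2; simpa [h0v] using this
    · have := congrFun hogf.symm 3; simpa [h0v] using this
    · have := congrFun hogf.symm 4; simpa [h0v] using this
    · have := congrFun hogf.symm 5; simpa [h0v] using this
  obtain ⟨hg10, hg20, hg30, hg21, hg31, hg32⟩ := hgE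
  have hgform : ∀ x : Vc, ⇑g x =
      ![(c:ℂ)*(e:ℂ)*x 1, -((c:ℂ)*(e:ℂ)*x 0), (c:ℂ)*x 3, -((c:ℂ)*x 2)] := by
    intro x
    have := anti_apply g.toLinearMap (by simpa using hg) x
    simp only [LinearEquiv.coe_coe] at this
    rw [this, hg10, hg20, hg30, hg21, hg31, hg32]
    funext j; fin_cases j <;> simp <;> ring
  have hgsymm : ∀ ℓ : Vc, ⇑g.symm ℓ =
      ![-(ℓ 1)/((c:ℂ)*(e:ℂ)), ℓ 0/((c:ℂ)*(e:ℂ)), -(ℓ 3)/(c:ℂ), ℓ 2/(c:ℂ)] := by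
    intro ℓ
    rw [LinearEquiv.symm_apply_eq, hgform]
    funext j; fin_cases j <;> simp <;> field_simp <;> ring
  
  -- rationality
  have hratstep : ∀ p ∈ ratSet, PsiL g N b p ∈ ratSet := by
    rintro p ⟨hp1, hp2⟩
    obtain ⟨a0, ha0⟩ := hp1 0; obtain ⟨a1, ha1⟩ := hp1 1
    obtain ⟨a2, ha2⟩ := hp1 2; obtain ⟨a3, ha3⟩ := hp1 3
    obtain ⟨l0, hl0⟩ := hp2 0; obtain ⟨l1, hl1⟩ := hp2 1
    obtain ⟨l2, hl2⟩ := hp2 2; obtain ⟨l3, hl3⟩ := hp2 3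
    have happ := hPsiApp p
    refine ⟨fun i => ?_, fun i => ?_⟩
    · have h1 : (PsiL g N b p).1 = g.symm p.2 - ((b:ℚ):ℂ) • p.1 := by rw [happ]
      rw [h1, hgsymm]
      fin_cases i
      · exact ⟨-l1/((c:ℚ)*(e:ℚ)) - b*a0, by simp [hl1, ha0]; try push_cast; try ring⟩
      · exact ⟨l0/((c:ℚ)*(e:ℚ)) - b*a1, by simp [hl0, ha1]; try push_cast; try ring⟩
      · exact ⟨-l3/(c:ℚ) - b*a2, by simp [hl3, ha2]; try push_cast; try ring⟩
      · exact ⟨l2/(c:ℚ) - b*a3, by simp [hl2, ha3]; try push_cast; try ring⟩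
    · have h2 : (PsiL g N b p).2 = ((b:ℚ):ℂ) • p.2 - ((N:ℚ):ℂ) • g p.1 := by rw [happ]
      rw [h2, hgform]
      fin_cases i
      · exact ⟨b*l0 - N*((c:ℚ)*(e:ℚ)*a1), by simp [hl0, ha1]; try push_cast; try ring⟩
      · exact ⟨b*l1 + N*((c:ℚ)*(e:ℚ)*a0), by simp [hl1, ha0]; try push_cast; try ring⟩
      · exact ⟨b*l2 - N*((c:ℚ)*a3), by simp [hl2, ha3]; try push_cast; try ring⟩
      · exact ⟨b*l3 + N*((c:ℚ)*a2), by simp [hl3, ha2]; try push_cast; try ring⟩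
  have hratsmul : ∀ (a : ℚ), ∀ p ∈ ratSet, ((a:ℚ):ℂ) • p ∈ ratSet := by
    rintro a p ⟨hp1, hp2⟩
    refine ⟨fun i => ?_, fun i => ?_⟩
    · obtain ⟨q', hq'⟩ := hp1 i
      exact ⟨a*q', by simp [hq']; try push_cast; try ring⟩
    · obtain ⟨q', hq'⟩ := hp2 i
      exact ⟨a*q', by simp [hq']; try push_cast; try ring⟩
  refine ⟨?_, hPsi2, ⟨key1, key2, hkpos⟩, ?_⟩
  · apply Set.eq_of_subset_of_subset
    · rintro x ⟨p, hp, rfl⟩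
      exact hratstep p hp
    · intro x hx
      refine ⟨((-(N - b^2)⁻¹ : ℚ):ℂ) • PsiL g N b x,
        hratsmul _ _ (hratstep x hx), ?_⟩
      rw [_root_.map_smul, hPsi2, smul_smul]
      have : ((-(N - b^2)⁻¹ : ℚ):ℂ) * -(((N - b^2:ℚ)):ℂ) = 1 := by
        have hne : ((N - b^2 : ℚ):ℂ) ≠ 0 := Rat.cast_ne_zero.mpr hkpos.ne'
        push_cast at hne ⊢
        field_simp [hne]
      rw [this, one_smul]
    -- part (iii)
  intro σ hσD hσh H hH
  obtain ⟨hσne, hBf0, -, -⟩ := hσD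
  have hevσ : (c:ℂ)*(e:ℂ)*σ.1 0 + (c:ℂ)*σ.1 5 + (s:ℂ)*σ.2 = 0 := hσh
  have hvolσ : σ.1 0 * σ.1 5 - σ.1 1 * σ.1 4 + σ.1 2 * σ.1 3 + σ.1 3 * σ.1 2
      - σ.1 4 * σ.1 1 + σ.1 5 * σ.1 0 - (m:ℂ) * σ.2 * σ.2 = 0 := by
    have hthis : volp σ.1 σ.1 - (m:ℂ) * σ.2 * σ.2 = 0 := hBf0
    unfold volp at hthis
    linear_combination hthis
  have hrelC : ((t1:ℤ):ℂ)*((t2:ℤ):ℂ) = 2*(m:ℂ)*((t3:ℤ):ℂ)^2 := by exact_mod_cast hrel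
  have hNC : ((N:ℚ):ℂ) * (((c:ℤ):ℂ)^2*((e:ℤ):ℂ)*((t2:ℤ):ℂ)) = ((t1:ℤ):ℂ) := by
    rw [hN, Nq]
    push_cast
    field_simp
  have hbC : ((b:ℚ):ℂ) * (((c:ℤ):ℂ)^2*((e:ℤ):ℂ)*((t2:ℤ):ℂ)) = ((s:ℤ):ℂ)*((t3:ℤ):ℂ) := by
    rw [hb, bq]
    push_cast
    field_simp
  have hτp : (lam + (b:ℂ))^2 - 2*(b:ℂ)*(lam + (b:ℂ)) + ((N:ℚ):ℂ) = 0 := by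
    linear_combination hlamsq + hkC
  have hτm : (-lam + (b:ℂ))^2 - 2*(b:ℂ)*(-lam + (b:ℂ)) + ((N:ℚ):ℂ) = 0 := by
    linear_combination hlamsq + hkC
  have hbp : lam + (b:ℂ) ≠ (b:ℂ) := fun hcon => hlamne (by linear_combination hcon)
  have hbm : -lam + (b:ℂ) ≠ (b:ℂ) := fun hcon => hlamne (by linear_combination -hcon)
  clear_value N b lam
  rcases hH with ⟨hσ2, f, hfa, hfbij, hfio, rfl⟩ | ⟨hσ2, U, hU2, ⟨v, w, hUsp, t, ht0, hvw⟩, rfl⟩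
  · -- CASE A : graph of f
    have hff := fun x => anti_apply f hfa x
    set p := f (ef 1) 0 with hpdef
    set q := f (ef 2) 0 with hqdef
    set r := f (ef 3) 0 with hrdef
    set u := f (ef 2) 1 with hudef
    set vv := f (ef 3) 1 with hvvdef
    set ww := f (ef 3) 2 with hwwdef
    set μc : ℂ := (-2*((t3:ℤ):ℂ))/(((t2:ℤ):ℂ)*σ.2) with hμc
    clear_value p q r u vv ww
    have hμeq : μc * (((t2:ℤ):ℂ)*σ.2) = -2*((t3:ℤ):ℂ) := by
      rw [hμc]
      field_simp
    have hio : ∀ k : Fin 6, iotaMap (omegaF ⇑f) k = μc * σ.1 k := by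
      intro k
      rw [hfio, hμc]
      simp
    rw [omegaF_eq f hfa] at hio
    have e0 : ww = μc * σ.1 0 := by rw [hwwdef]; exact hio 0
    have e1 : -vv = μc * σ.1 1 := by rw [hvvdef]; exact hio 1
    have e2 : u = μc * σ.1 2 := by rw [hudef]; exact hio 2
    have e3 : r = μc * σ.1 3 := by rw [hrdef]; exact hio 3
    have e4 : -q = μc * σ.1 4 := by rw [hqdef]; exact hio 4
    have e5 : p = μc * σ.1 5 := by rw [hpdef]; exact hio 5
    have hstar1 : ((t2:ℤ):ℂ) * (((c:ℤ):ℂ)*p + ((c:ℤ):ℂ)*((e:ℤ):ℂ)*ww) = 2*((s:ℤ):ℂ)*((t3:ℤ):ℂ) := by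
      rw [e5, e0]
      linear_combination (μc*((t2:ℤ):ℂ))*hevσ - ((s:ℤ):ℂ)*hμeq
    have hstar2 : ((t2:ℤ):ℂ) * (p*ww - q*vv + r*u) = ((t1:ℤ):ℂ) := by
      have e1' : vv = -(μc * σ.1 1) := by linear_combination -e1
      have e4' : q = -(μc * σ.1 4) := by linear_combination -e4
      have hscaled : 2*((t2:ℤ):ℂ)*(((t2:ℤ):ℂ)*(p*ww - q*vv + r*u) - ((t1:ℤ):ℂ)) = 0 := by
        rw [e0, e5, e1', e4', e2, e3]
        linear_combination (((t2:ℤ):ℂ)*μc)^2 * hvolσ +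
          (m:ℂ)*(μc*((t2:ℤ):ℂ)*σ.2 - 2*((t3:ℤ):ℂ))*hμeq - 2*hrelC
      rcases mul_eq_zero.mp hscaled with hh | hh
      · exact absurd hh (mul_ne_zero two_ne_zero hT2)
      · linear_combination hh
    set jmap : Vc →ₗ[ℂ] Vc × Vc := LinearMap.prod LinearMap.id f with hjmap
    have hjinj : Function.Injective ⇑jmap := fun a b hab => congrArg Prod.fst hab
    have hgraphrange : LinearMap.graph f = LinearMap.range jmap := by
      ext z
      rw [LinearMap.mem_graph_iff, LinearMap.mem_range]
      constructor
      · intro hz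
        exact ⟨z.1, Prod.ext_iff.mpr ⟨rfl, hz.symm⟩⟩
      · rintro ⟨y, rfl⟩
        rfl
    have frmap : ∀ (K : Submodule ℂ Vc),
        Module.finrank ℂ (Submodule.map jmap K) = Module.finrank ℂ K :=
      fun K => ((Submodule.equivMapOfInjective jmap hjinj K).finrank_eq).symm
    have frk2 : ∀ (z1 z2 : Vc), LinearIndependent ℂ ![z1, z2] →
        Module.finrank ℂ (Submodule.span ℂ {z1, z2}) = 2 := by
      intro z1 z2 hind
      have h := finrank_span_eq_card hind
      have hrg : Set.range ![z1, z2] = {z1, z2} := by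
        simp [Matrix.range_cons, Matrix.range_empty]
        exact Set.pair_comm z2 z1
      rw [hrg] at h
      simpa using h
    have main : ∀ τ : ℂ, τ^2 - 2*(b:ℂ)*τ + ((N:ℚ):ℂ) = 0 → τ ≠ (b:ℂ) →
        ∃ z1 z2 : Vc, LinearIndependent ℂ ![z1, z2] ∧
          LinearMap.ker (f - τ • g.toLinearMap) = Submodule.span ℂ {z1, z2} := by
      intro τ hτ hτb
      have hDeq : (f - τ • g.toLinearMap) =
          amap (p - τ*(((c:ℤ):ℂ)*((e:ℤ):ℂ))) q r u vv (ww - τ*((c:ℤ):ℂ)) := by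
        apply LinearMap.ext
        intro x
        rw [amap_apply, LinearMap.sub_apply, LinearMap.smul_apply]
        rw [show g.toLinearMap x = ⇑g x from rfl, hgform x, hff x]
        funext j; fin_cases j <;> simp <;> ring
      rw [hDeq]
      apply ker_amap
      · have hscale : ((t2:ℤ):ℂ) * ((p - τ*(((c:ℤ):ℂ)*((e:ℤ):ℂ)))*(ww - τ*((c:ℤ):ℂ))
            - q*vv + r*u) = 0 := by
          linear_combination hstar2 - τ*hstar1 + (((c:ℤ):ℂ)^2*((e:ℤ):ℂ)*((t2:ℤ):ℂ))*hτ
            + 2*τ*hbC - hNC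
        rcases mul_eq_zero.mp hscale with hh | hh
        · exact absurd hh hT2
        · exact hh
      · rintro ⟨hP0, hq0, hr0, hu0, hv0, hW0⟩
        apply hτb
        have hzz : (τ - (b:ℂ)) * (2*((c:ℤ):ℂ)^2*((e:ℤ):ℂ)*((t2:ℤ):ℂ)) = 0 := by
          linear_combination hstar1 - 2*hbC - ((t2:ℤ):ℂ)*((c:ℤ):ℂ)*hP0
            - ((t2:ℤ):ℂ)*((c:ℤ):ℂ)*((e:ℤ):ℂ)*hW0
        rcases mul_eq_zero.mp hzz with hh | hh
        · exact sub_eq_zero.mp hh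
        · exact absurd hh (mul_ne_zero (mul_ne_zero
            (mul_ne_zero two_ne_zero (pow_ne_zero 2 hC)) hE) hT2)
    have eig : ∀ τ : ℂ, τ^2 - 2*(b:ℂ)*τ + ((N:ℚ):ℂ) = 0 →
        Module.End.eigenspace (PsiL g N b) (τ - (b:ℂ)) ⊓ LinearMap.graph f
          = Submodule.map jmap (LinearMap.ker (f - τ • g.toLinearMap)) := by
      intro τ hτ
      ext x
      rw [Submodule.mem_inf, Module.End.mem_eigenspace_iff, LinearMap.mem_graph_iff,
        Submodule.mem_map]
      constructor
      · rintro ⟨heig, hgr⟩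
        refine ⟨x.1, ?_, Prod.ext_iff.mpr ⟨rfl, hgr.symm⟩⟩
        rw [hPsiApp] at heig
        have h1 : g.symm x.2 - (b:ℂ) • x.1 = (τ - (b:ℂ)) • x.1 := by
          have := congrArg Prod.fst heig
          simpa using this
        have h2 : g.symm x.2 = τ • x.1 := by
          rw [show τ • x.1 = (τ - (b:ℂ)) • x.1 + (b:ℂ) • x.1 by
            rw [← add_smul]; ring_nf, ← h1]
          abel
        have h3 : x.2 = τ • ⇑g x.1 := by
          have hv := congrArg ⇑g h2
          rwa [g.apply_symm_apply, _root_.map_smul] at hv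
        rw [LinearMap.mem_ker, LinearMap.sub_apply, LinearMap.smul_apply]
        rw [show g.toLinearMap x.1 = ⇑g x.1 from rfl, ← hgr, h3, sub_self]
      · rintro ⟨y, hy, rfl⟩
        rw [LinearMap.mem_ker, LinearMap.sub_apply, LinearMap.smul_apply] at hy
        have hfy : f y = τ • ⇑g y := by
          have := sub_eq_zero.mp hy
          rw [this]
          rfl
        constructor
        · rw [hPsiApp]
          apply Prod.ext_iff.mpr
          constructor
          · show g.symm ((jmap y).2) - (b:ℂ) • ((jmap y).1) = (τ - (b:ℂ)) • ((jmap y).1)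
            show g.symm (f y) - (b:ℂ) • y = (τ - (b:ℂ)) • y
            rw [hfy, _root_.map_smul, g.symm_apply_apply, ← sub_smul]
          · show (b:ℂ) • (f y) - ((N:ℚ):ℂ) • ⇑g y = (τ - (b:ℂ)) • (f y)
            rw [hfy, smul_smul, smul_smul, ← sub_smul]
            congr 1
            linear_combination -hτ
        · rfl
    obtain ⟨z1p, z2p, hindp, hkerp⟩ := main (lam + (b:ℂ)) hτp hbp
    obtain ⟨z1m, z2m, hindm, hkerm⟩ := main (-lam + (b:ℂ)) hτm hbm
    have eigp : Module.End.eigenspace (PsiL g N b) lam ⊓ LinearMap.graph f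
        = Submodule.map jmap (LinearMap.ker (f - (lam + (b:ℂ)) • g.toLinearMap)) := by
      have := eig (lam + (b:ℂ)) hτp
      rwa [add_sub_cancel_right] at this
    have eigm : Module.End.eigenspace (PsiL g N b) (-lam) ⊓ LinearMap.graph f
        = Submodule.map jmap (LinearMap.ker (f - (-lam + (b:ℂ)) • g.toLinearMap)) := by
      have := eig (-lam + (b:ℂ)) hτm
      rwa [add_sub_cancel_right] at this
    have hdisj : LinearMap.ker (f - (lam + (b:ℂ)) • g.toLinearMap) ⊓
        LinearMap.ker (f - (-lam + (b:ℂ)) • g.toLinearMap) = ⊥ := by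
      rw [eq_bot_iff]
      intro x hx
      obtain ⟨hx1, hx2⟩ := Submodule.mem_inf.mp hx
      rw [LinearMap.mem_ker, LinearMap.sub_apply, LinearMap.smul_apply] at hx1 hx2
      have ee1 := sub_eq_zero.mp hx1
      have ee2 := sub_eq_zero.mp hx2
      have ee3 : ((lam + (b:ℂ)) - (-lam + (b:ℂ))) • (g.toLinearMap x) = 0 := by
        rw [sub_smul, ← ee1, ← ee2, sub_self]
      rw [show (lam + (b:ℂ)) - (-lam + (b:ℂ)) = 2*lam by ring] at ee3
      have hgx : g.toLinearMap x = 0 := by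
        rcases smul_eq_zero.mp ee3 with hh | hh
        · exact absurd hh (mul_ne_zero two_ne_zero hlamne)
        · exact hh
      have hx0 : x = 0 := by
        apply g.injective
        rw [show ⇑g x = g.toLinearMap x from rfl, hgx, map_zero]
      simp [hx0]
    have hVc4 : Module.finrank ℂ Vc = 4 := by
      simp [Module.finrank_pi]
    have hfrkp : Module.finrank ℂ (LinearMap.ker (f - (lam + (b:ℂ)) • g.toLinearMap)) = 2 := by
      rw [hkerp]
      exact frk2 _ _ hindp
    have hfrkm : Module.finrank ℂ (LinearMap.ker (f - (-lam + (b:ℂ)) • g.toLinearMap)) = 2 := by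
      rw [hkerm]
      exact frk2 _ _ hindm
    have hsup : LinearMap.ker (f - (lam + (b:ℂ)) • g.toLinearMap) ⊔
        LinearMap.ker (f - (-lam + (b:ℂ)) • g.toLinearMap) = ⊤ := by
      apply Submodule.eq_top_of_finrank_eq
      have hh := Submodule.finrank_sup_add_finrank_inf_eq
        (LinearMap.ker (f - (lam + (b:ℂ)) • g.toLinearMap))
        (LinearMap.ker (f - (-lam + (b:ℂ)) • g.toLinearMap))
      rw [hdisj, hfrkp, hfrkm, finrank_bot] at hh
      rw [hVc4]
      omega
    refine ⟨?_, ?_, ?_⟩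
    · intro x hx
      have hx' : x ∈ Submodule.map jmap (LinearMap.ker (f - (lam + (b:ℂ)) • g.toLinearMap))
          ⊔ Submodule.map jmap (LinearMap.ker (f - (-lam + (b:ℂ)) • g.toLinearMap)) := by
        rw [← Submodule.map_sup, hsup, Submodule.map_top, ← hgraphrange]
        exact hx
      rcases Submodule.mem_sup.mp hx' with ⟨y, hy, z, hz, rfl⟩
      rw [map_add]
      apply Submodule.add_mem
      · have hy2 : y ∈ Module.End.eigenspace (PsiL g N b) lam ⊓ LinearMap.graph f := by
          rw [eigp]
          exact hy
        obtain ⟨hye, hyg⟩ := Submodule.mem_inf.mp hy2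
        rw [Module.End.mem_eigenspace_iff] at hye
        rw [hye]
        exact Submodule.smul_mem _ _ hyg
      · have hz2 : z ∈ Module.End.eigenspace (PsiL g N b) (-lam) ⊓ LinearMap.graph f := by
          rw [eigm]
          exact hz
        obtain ⟨hze, hzg⟩ := Submodule.mem_inf.mp hz2
        rw [Module.End.mem_eigenspace_iff] at hze
        rw [hze]
        exact Submodule.smul_mem _ _ hzg
    · rw [eigp, frmap, hkerp]
      exact frk2 _ _ hindp
    · rw [eigm, frmap, hkerm]
      exact frk2 _ _ hindm
  · -- CASE B : U × Ann U
    have hσ1ne : σ.1 ≠ 0 := by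
      intro hcon0
      exact hσne (Prod.ext_iff.mpr ⟨hcon0, hσ2⟩)
    have hv0 : ∀ k : Fin 6, w2 v w k = t * σ.1 k := fun k => by
      rw [hvw]; simp
    have h0' : v 0 * w 1 - v 1 * w 0 = t * σ.1 0 := hv0 0
    have h5' : v 2 * w 3 - v 3 * w 2 = t * σ.1 5 := hv0 5
    have hev0 : ((c:ℤ):ℂ)*((e:ℤ):ℂ)*σ.1 0 + ((c:ℤ):ℂ)*σ.1 5 = 0 := by
      rw [hσ2] at hevσ
      linear_combination hevσ
    have hgvw : ⇑g v ⬝ᵥ w = 0 := by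
      rw [hgform]
      simp only [dotProduct, Fin.sum_univ_four, Matrix.cons_val_zero, Matrix.cons_val_one,
        Matrix.head_cons, Matrix.cons_val_two, Matrix.tail_cons, Matrix.cons_val_three]
      linear_combination -((c:ℤ):ℂ)*((e:ℤ):ℂ)*h0' - ((c:ℤ):ℂ)*h5' - t*hev0
    have hanti0 : ∀ x : Vc, ⇑g x ⬝ᵥ x = 0 := fun x => by
      have hxx := hg x x
      have hxx2 : (2:ℂ) * (⇑g x ⬝ᵥ x) = 0 := by linear_combination hxx
      exact (mul_eq_zero.mp hxx2).resolve_left two_ne_zero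
    have hgwv : ⇑g w ⬝ᵥ v = 0 := by
      have hvw' := hg v w
      rw [hgvw] at hvw'
      linear_combination hvw'
    have hvU : v ∈ U := by
      rw [hUsp]
      exact Submodule.subset_span (by simp)
    have hwU : w ∈ U := by
      rw [hUsp]
      exact Submodule.subset_span (by simp)
    have hAnnMem : ∀ ℓ : Vc, ℓ ∈ AnnS U ↔ (ℓ ⬝ᵥ v = 0 ∧ ℓ ⬝ᵥ w = 0) := by
      intro ℓ
      unfold AnnS
      rw [Submodule.mem_iInf]
      constructor
      · intro hall
        exact ⟨(Submodule.mem_iInf _).mp (hall v) hvU, (Submodule.mem_iInf _).mp (hall w) hwU⟩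
      · rintro ⟨hh1, hh2⟩ u'
        rw [Submodule.mem_iInf]
        intro hu'
        rw [hUsp] at hu'
        obtain ⟨a, b', hab⟩ := Submodule.mem_span_pair.mp hu'
        rw [LinearMap.mem_ker]
        show ℓ ⬝ᵥ u' = 0
        rw [← hab]
        rw [dotProduct_add, dotProduct_smul, dotProduct_smul, hh1, hh2]
        simp
    have hgU : ∀ x ∈ U, ⇑g x ∈ AnnS U := by
      intro x hx
      rw [hUsp] at hx
      obtain ⟨a, b', hab⟩ := Submodule.mem_span_pair.mp hx
      rw [hAnnMem, ← hab, _root_.map_add, _root_.map_smul, _root_.map_smul]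
      constructor
      · rw [add_dotProduct, smul_dotProduct, smul_dotProduct, hanti0, hgwv]
        simp
      · rw [add_dotProduct, smul_dotProduct, smul_dotProduct, hanti0, hgvw]
        simp
    have hwzne : w2 v w ≠ 0 := by
      rw [hvw]
      intro hcon
      rcases smul_eq_zero.mp hcon with hh | hh
      · exact ht0 hh
      · exact hσ1ne hh
    have hindvw : LinearIndependent ℂ ![v, w] := by
      rw [LinearIndependent.pair_iff]
      intro sa ta hst
      by_contra hcon
      push_neg at hcon
      apply hwzne
      by_cases hta : ta = 0
      · have hsa : sa ≠ 0 := by tauto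
        have hveq : v = 0 := by
          have hsv : sa • v = 0 := by
            rw [hta] at hst
            simpa using hst
          rcases smul_eq_zero.mp hsv with hh | hh
          · exact absurd hh hsa
          · exact hh
        rw [hveq]
        funext k
        fin_cases k
        · show (0:ℂ) * w 1 - (0:ℂ) * w 0 = 0
          ring
        · show (0:ℂ) * w 2 - (0:ℂ) * w 0 = 0
          ring
        · show (0:ℂ) * w 3 - (0:ℂ) * w 0 = 0
          ring
        · show (0:ℂ) * w 2 - (0:ℂ) * w 1 = 0
          ring
        · show (0:ℂ) * w 3 - (0:ℂ) * w 1 = 0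
          ring
        · show (0:ℂ) * w 3 - (0:ℂ) * w 2 = 0
          ring
      · have h9 : ta • w = -(sa • v) := by
          rwa [add_comm, add_eq_zero_iff_eq_neg] at hst
        have hweq : w = (-(sa/ta)) • v := by
          have h10 : w = ta⁻¹ • (ta • w) := (inv_smul_smul₀ hta w).symm
          rw [h10, h9, smul_neg, smul_smul, ← neg_smul]
          congr 1
          field_simp
        rw [hweq]
        funext k
        fin_cases k
        · show v 0 * (-(sa/ta) * v 1) - v 1 * (-(sa/ta) * v 0) = 0
          ring
        · show v 0 * (-(sa/ta) * v 2) - v 2 * (-(sa/ta) * v 0) = 0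
          ring
        · show v 0 * (-(sa/ta) * v 3) - v 3 * (-(sa/ta) * v 0) = 0
          ring
        · show v 1 * (-(sa/ta) * v 2) - v 2 * (-(sa/ta) * v 1) = 0
          ring
        · show v 1 * (-(sa/ta) * v 3) - v 3 * (-(sa/ta) * v 1) = 0
          ring
        · show v 2 * (-(sa/ta) * v 3) - v 3 * (-(sa/ta) * v 2) = 0
          ring
    have hVc4 : Module.finrank ℂ Vc = 4 := by
      simp [Module.finrank_pi]
    have hkerM : AnnS U = LinearMap.ker (Matrix.mulVecLin (Matrix.of ![v, w])) := by
      ext ℓ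
      rw [hAnnMem, LinearMap.mem_ker]
      constructor
      · rintro ⟨hh1, hh2⟩
        funext i
        fin_cases i
        · show v ⬝ᵥ ℓ = 0
          rw [dotProduct_comm]
          exact hh1
        · show w ⬝ᵥ ℓ = 0
          rw [dotProduct_comm]
          exact hh2
      · intro hz
        constructor
        · have hz0 : v ⬝ᵥ ℓ = 0 := congrFun hz 0
          rw [dotProduct_comm]
          exact hz0
        · have hz1 : w ⬝ᵥ ℓ = 0 := congrFun hz 1
          rw [dotProduct_comm]
          exact hz1
    have hrank2 : (Matrix.of ![v, w]).rank = 2 := by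
      rw [← Matrix.rank_transpose]
      have hdef : (Matrix.of ![v, w])ᵀ.rank
          = Module.finrank ℂ (LinearMap.range (Matrix.mulVecLin (Matrix.of ![v, w])ᵀ)) := rfl
      rw [hdef, Matrix.range_mulVecLin, Matrix.col, Matrix.transpose_transpose]
      have hrg : Set.range (Matrix.of ![v, w]) = {v, w} := by
        show Set.range ![v, w] = {v, w}
        simp [Matrix.range_cons, Matrix.range_empty]
        exact Set.pair_comm w v
      rw [hrg, ← hUsp]
      exact hU2
    have hAnnrank : Module.finrank ℂ (AnnS U) = 2 := by
      have hrn := LinearMap.finrank_range_add_finrank_ker (Matrix.mulVecLin (Matrix.of ![v, w]))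
      rw [hVc4] at hrn
      have hr2 : Module.finrank ℂ
          (LinearMap.range (Matrix.mulVecLin (Matrix.of ![v, w]))) = 2 := hrank2
      rw [hr2] at hrn
      rw [hkerM]
      exact Nat.add_left_cancel hrn
    have hmapg : Submodule.map g.toLinearMap U = AnnS U := by
      apply Submodule.eq_of_le_of_finrank_le
      · rintro ℓ ⟨x, hx, rfl⟩
        exact hgU x hx
      · have hmr : Module.finrank ℂ (Submodule.map g.toLinearMap U) = Module.finrank ℂ U :=
          LinearEquiv.finrank_map_eq g U
        rw [hAnnrank, hmr, hU2]
    have eigB : ∀ τ : ℂ, τ^2 - 2*(b:ℂ)*τ + ((N:ℚ):ℂ) = 0 →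
        Module.End.eigenspace (PsiL g N b) (τ - (b:ℂ)) ⊓ U.prod (AnnS U)
          = Submodule.map (LinearMap.prod LinearMap.id (τ • g.toLinearMap)) U := by
      intro τ hτ
      ext x
      rw [Submodule.mem_inf, Submodule.mem_prod, Module.End.mem_eigenspace_iff,
        Submodule.mem_map]
      constructor
      · rintro ⟨heig, hx1, hx2⟩
        refine ⟨x.1, hx1, ?_⟩
        rw [hPsiApp] at heig
        have hcf : g.symm x.2 - (b:ℂ) • x.1 = (τ - (b:ℂ)) • x.1 := by
          have := congrArg Prod.fst heig
          simpa using this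
        have h2' : g.symm x.2 = τ • x.1 := by
          rw [show τ • x.1 = (τ - (b:ℂ)) • x.1 + (b:ℂ) • x.1 by
            rw [← add_smul]; ring_nf, ← hcf]
          abel
        have h2 : x.2 = τ • ⇑g x.1 := by
          have hv' := congrArg ⇑g h2'
          rwa [g.apply_symm_apply, _root_.map_smul] at hv'
        apply Prod.ext_iff.mpr
        exact ⟨rfl, h2.symm⟩
      · rintro ⟨y, hy, rfl⟩
        refine ⟨?_, hy, ?_⟩
        · rw [hPsiApp]
          apply Prod.ext_iff.mpr
          constructor
          · show g.symm ((τ • g.toLinearMap) y) - (b:ℂ) • y = (τ - (b:ℂ)) • y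
            rw [LinearMap.smul_apply, show g.toLinearMap y = ⇑g y from rfl,
              _root_.map_smul, g.symm_apply_apply, ← sub_smul]
          · show (b:ℂ) • ((τ • g.toLinearMap) y) - ((N:ℚ):ℂ) • ⇑g y
              = (τ - (b:ℂ)) • ((τ • g.toLinearMap) y)
            rw [LinearMap.smul_apply, show g.toLinearMap y = ⇑g y from rfl]
            rw [smul_smul, smul_smul, ← sub_smul]
            congr 1
            linear_combination -hτ
        · exact Submodule.smul_mem _ _ (hgU y hy)
    refine ⟨?_, ?_, ?_⟩
    · intro x hx
      obtain ⟨hx1, hx2⟩ := Submodule.mem_prod.mp hx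
      rw [Submodule.mem_prod]
      constructor
      · show (PsiL g N b x).1 ∈ U
        rw [hPsiApp]
        show g.symm x.2 - (b:ℂ) • x.1 ∈ U
        apply Submodule.sub_mem
        · have hxm : x.2 ∈ Submodule.map g.toLinearMap U := by
            rw [hmapg]
            exact hx2
          obtain ⟨y, hy, hyx⟩ := hxm
          have hsy : g.symm x.2 = y := by
            rw [← hyx]
            exact g.symm_apply_apply y
          rw [hsy]
          exact hy
        · exact Submodule.smul_mem _ _ hx1
      · show (PsiL g N b x).2 ∈ AnnS U
        rw [hPsiApp]
        show (b:ℂ) • x.2 - ((N:ℚ):ℂ) • ⇑g x.1 ∈ AnnS U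
        exact Submodule.sub_mem _ (Submodule.smul_mem _ _ hx2)
          (Submodule.smul_mem _ _ (hgU _ hx1))
    · have e1 : Module.End.eigenspace (PsiL g N b) lam ⊓ U.prod (AnnS U)
          = Submodule.map (LinearMap.prod LinearMap.id ((lam + (b:ℂ)) • g.toLinearMap)) U := by
        have := eigB (lam + (b:ℂ)) hτp
        rwa [add_sub_cancel_right] at this
      rw [e1]
      have hinj : Function.Injective
          ⇑(LinearMap.prod LinearMap.id ((lam + (b:ℂ)) • g.toLinearMap)) :=
        fun a b hab => congrArg Prod.fst hab
      rw [((Submodule.equivMapOfInjective _ hinj U).finrank_eq).symm]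
      exact hU2
    · have e1 : Module.End.eigenspace (PsiL g N b) (-lam) ⊓ U.prod (AnnS U)
          = Submodule.map (LinearMap.prod LinearMap.id ((-lam + (b:ℂ)) • g.toLinearMap)) U := by
        have := eigB (-lam + (b:ℂ)) hτm
        rwa [add_sub_cancel_right] at this
      rw [e1]
      have hinj : Function.Injective
          ⇑(LinearMap.prod LinearMap.id ((-lam + (b:ℂ)) • g.toLinearMap)) :=
        fun a b hab => congrArg Prod.fst hab
      rw [((Submodule.equivMapOfInjective _ hinj U).finrank_eq).symm]
      exact hU2
end
end
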